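/- arXiv:1808.04817 — 4 statements merged into one kernel-verified Lean document; each statement's English description precedes it below -/
import Mathlib

section
/- If f : 𝕋 → 𝕋 is a sense-preserving circle homeomorphism whose Fourier support {n ∈ ℤ : f̂(n) ≠ 0} is a bounded subset of ℤ, then f is a rotation, i.e., there exists c ∈ 𝕋 such that f(z) = c·z for all z ∈ 𝕋. -/
open Complex MeasureTheory intervalIntegral ComplexConjugate

noncomputable def fCoeff (f : ℂ → ℂ) (n : ℤ) : ℂ :=
  (1 / (2 * Real.pi) : ℂ) * ∫ θ in (0:ℝ)..(2 * Real.pi),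
    f (Complex.exp (θ * Complex.I)) * Complex.exp (-(n : ℂ) * θ * Complex.I)

/-- A sense-preserving homeomorphism of the unit circle, described via a continuous
strictly increasing degree-one lift. -/
def CirclePosHomeo (f : ℂ → ℂ) : Prop :=
  ∃ F : ℝ → ℝ, Continuous F ∧ StrictMono F ∧
    (∀ θ, F (θ + 2 * Real.pi) = F θ + 2 * Real.pi) ∧
    ∀ θ : ℝ, f (Complex.exp (θ * Complex.I)) = Complex.exp (F θ * Complex.I)

lemma integral_exp_int (l : ℤ) :
    ∫ θ in (0:ℝ)..(2*Real.pi), Complex.exp (l * θ * Complex.I)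
      = if l = 0 then (2*Real.pi : ℂ) else 0 := by
  split_ifs with h
  · simp [h, Real.pi_pos.le]
  · have hc : (l : ℂ) * Complex.I ≠ 0 := by
      simp [Complex.I_ne_zero, h]
    have h2 := integral_exp_mul_complex (a := (0:ℝ)) (b := 2*Real.pi) hc
    have hint : ∀ θ : ℝ, (l:ℂ) * θ * Complex.I = ((l:ℂ) * Complex.I) * θ := by
      intro θ; ring
    simp_rw [hint]
    rw [h2]
    have : Complex.exp ((l:ℂ) * Complex.I * (2*Real.pi)) = 1 := by
      rw [show (l:ℂ) * Complex.I * (2*Real.pi) = (l:ℂ) * (2*Real.pi*Complex.I) by push_cast; ring]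
      exact Complex.exp_int_mul_two_pi_mul_I l
    push_cast
    rw [this]
    simp


lemma const_of_int_valued (h : ℝ → ℝ) (hc : Continuous h)
    (hk : ∀ θ, ∃ k : ℤ, h θ - h 0 = 2 * Real.pi * k) : ∀ θ, h θ = h 0 := by
  intro t
  by_contra hne
  obtain ⟨k, hkt⟩ := hk t
  have hπ := Real.pi_pos
  have hk0 : (k:ℝ) ≠ 0 := by
    intro h0
    exact hne (by rw [h0, mul_zero] at hkt; linarith)
  have hIVT := intermediate_value_uIcc (a := (0:ℝ)) (b := t) hc.continuousOn
  rcases lt_or_gt_of_ne hne with hlt | hgt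
  · -- h t < h 0, so h t ≤ h 0 - 2π, take v = h 0 - π
    have hk1 : (k:ℝ) ≤ -1 := by
      have : (k:ℝ) < 0 := by nlinarith
      have : k < 0 := by exact_mod_cast this
      exact_mod_cast (by omega : k ≤ -1)
    have hv : h 0 - Real.pi ∈ Set.uIcc (h 0) (h t) := by
      apply Set.mem_uIcc.2
      right; constructor <;> nlinarith
    obtain ⟨s, _, hs⟩ := hIVT (by rwa [Set.uIcc_comm] at hv)
    obtain ⟨k', hk'⟩ := hk s
    rw [hs] at hk'
    have : (1:ℝ) = 2 * (-k') := by push_cast; nlinarith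
    have : (2:ℤ) * (-k') = 1 := by exact_mod_cast this.symm
    omega
  · have hk1 : (1:ℝ) ≤ (k:ℝ) := by
      have : (0:ℝ) < k := by nlinarith
      have : 0 < k := by exact_mod_cast this
      exact_mod_cast (by omega : 1 ≤ k)
    have hv : h 0 + Real.pi ∈ Set.uIcc (h 0) (h t) := by
      apply Set.mem_uIcc.2
      left; constructor <;> nlinarith
    obtain ⟨s, _, hs⟩ := hIVT (by rwa [Set.uIcc_comm] at hv)
    obtain ⟨k', hk'⟩ := hk s
    rw [hs] at hk'
    have : (1:ℝ) = 2 * k' := by push_cast at hk' ⊢; nlinarith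
    have : (2:ℤ) * k' = 1 := by exact_mod_cast this.symm
    omega

lemma coeff_orth (s : Finset ℤ) (c : ℤ → ℂ) (k : ℤ) (hk : k ≠ 0)
    (hone : ∀ θ : ℝ, (∑ n ∈ s, c n * Complex.exp (n * θ * Complex.I)) *
        conj (∑ m ∈ s, c m * Complex.exp (m * θ * Complex.I)) = 1) :
    ∑ n ∈ s, ∑ m ∈ s, (if n - m = k then c n * conj (c m) else 0) = 0 := by
  have hπ := Real.pi_pos
  have hexpand : ∀ θ : ℝ,
      (∑ n ∈ s, c n * Complex.exp (n * θ * Complex.I)) *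
        conj (∑ m ∈ s, c m * Complex.exp (m * θ * Complex.I)) * Complex.exp (-k * θ * Complex.I)
      = ∑ n ∈ s, ∑ m ∈ s, (c n * conj (c m)) * Complex.exp ((n - m - k : ℤ) * θ * Complex.I) := by
    intro θ
    rw [map_sum, Finset.sum_mul_sum, Finset.sum_mul]
    congr 1
    ext n
    rw [Finset.sum_mul]
    congr 1
    ext m
    simp only [map_mul]
    rw [← Complex.exp_conj]
    simp only [map_mul, Complex.conj_I, Complex.conj_ofReal, map_intCast]
    rw [show c n * Complex.exp (n * θ * Complex.I) *
        ((starRingEnd ℂ) (c m) * Complex.exp ((m:ℂ) * θ * -Complex.I)) *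
        Complex.exp (-(k:ℂ) * θ * Complex.I)
      = c n * (starRingEnd ℂ) (c m) * (Complex.exp (n * θ * Complex.I) *
        Complex.exp ((m:ℂ) * θ * -Complex.I) * Complex.exp (-(k:ℂ) * θ * Complex.I)) by ring]
    rw [← Complex.exp_add, ← Complex.exp_add]
    congr 2
    push_cast
    ring
  have hL : ∫ θ in (0:ℝ)..(2*Real.pi),
      ((∑ n ∈ s, c n * Complex.exp (n * θ * Complex.I)) *
        conj (∑ m ∈ s, c m * Complex.exp (m * θ * Complex.I)) * Complex.exp (-k * θ * Complex.I))
      = 0 := by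
    have : ∀ θ : ℝ, (∑ n ∈ s, c n * Complex.exp (n * θ * Complex.I)) *
        conj (∑ m ∈ s, c m * Complex.exp (m * θ * Complex.I)) * Complex.exp (-k * θ * Complex.I)
        = Complex.exp ((-k : ℤ) * θ * Complex.I) := by
      intro θ; rw [hone θ, one_mul]; push_cast; ring_nf
    simp_rw [this]
    rw [integral_exp_int]
    simp [hk]
  rw [intervalIntegral.integral_congr (g := fun θ => ∑ n ∈ s, ∑ m ∈ s,
      (c n * conj (c m)) * Complex.exp ((n - m - k : ℤ) * θ * Complex.I))
      (fun θ _ => hexpand θ)] at hL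
  have hint : ∀ (l : ℤ) (a : ℂ), IntervalIntegrable
      (fun θ : ℝ => a * Complex.exp ((l:ℂ) * θ * Complex.I)) volume 0 (2*Real.pi) := by
    intro l a
    apply Continuous.intervalIntegrable
    exact continuous_const.mul (Complex.continuous_exp.comp (by continuity))
  have hL' : ∫ θ in (0:ℝ)..(2*Real.pi), ∑ p ∈ s ×ˢ s,
      (c p.1 * conj (c p.2)) * Complex.exp ((p.1 - p.2 - k : ℤ) * θ * Complex.I) = 0 := by
    rw [← hL]
    apply intervalIntegral.integral_congr
    intro θ _
    exact Finset.sum_product _ _ _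
  clear hL
  rename' hL' => hL
  rw [intervalIntegral.integral_finset_sum (fun p _ => hint _ _)] at hL
  simp_rw [intervalIntegral.integral_const_mul, integral_exp_int] at hL
  rw [← Finset.sum_product' (f := fun n m => (if n - m = k then c n * conj (c m) else 0))]
  have h2 : ∑ p ∈ s ×ˢ s, (c p.1 * conj (c p.2)) * (if p.1 - p.2 - k = 0 then (2*Real.pi:ℂ) else 0)
      = (2*Real.pi:ℂ) * ∑ p ∈ s ×ˢ s, (if p.1 - p.2 = k then c p.1 * conj (c p.2) else 0) := by
    rw [Finset.mul_sum]
    refine Finset.sum_congr rfl fun p _ => ?_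
    by_cases h : p.1 - p.2 = k
    · rw [if_pos h, show p.1 - p.2 - k = 0 by omega, if_pos rfl]
      ring
    · have h' : ¬ (p.1 - p.2 - k = 0) := by omega
      simp [h, h']
  rw [h2] at hL
  have h2π : (2*Real.pi : ℂ) ≠ 0 := by
    simp [Complex.ext_iff, Real.pi_ne_zero]
  exact (mul_eq_zero.mp hL).resolve_left h2π

/-- a circle homeomorphism with bounded Fourier support is a rotation. -/
theorem circle_homeo_bounded_support_is_rotation
    (f : ℂ → ℂ) (hf : CirclePosHomeo f)
    (hbdd : BddAbove {n : ℤ | fCoeff f n ≠ 0} ∧ BddBelow {n : ℤ | fCoeff f n ≠ 0}) :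
    ∃ c : ℂ, ‖c‖ = 1 ∧ ∀ z : ℂ, ‖z‖ = 1 → f z = c * z := by
  obtain ⟨F, hFc, hFm, hFp, hFf⟩ := hf
  have hπ := Real.pi_pos
  haveI : Fact (0 < 2 * Real.pi) := ⟨by positivity⟩
  -- the periodic function on ℝ and its descent to the circle
  have hu : Function.Periodic (fun θ : ℝ => Complex.exp (F θ * Complex.I)) (2 * Real.pi) := by
    intro θ
    simp only [hFp θ]
    push_cast
    rw [add_mul, Complex.exp_add, Complex.exp_two_pi_mul_I, mul_one]
  have hucont : Continuous (fun θ : ℝ => Complex.exp (F θ * Complex.I)) := by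
    exact Complex.continuous_exp.comp (by continuity)
  let g : C(AddCircle (2 * Real.pi), ℂ) := ⟨hu.lift, hucont.quotient_liftOn' _⟩
  have hg : ∀ θ : ℝ, g (θ : AddCircle (2 * Real.pi)) = Complex.exp (F θ * Complex.I) :=
    fun θ => rfl
  set c : ℤ → ℂ := fun n => fourierCoeff (⇑g) n with hcdef
  -- fourier evaluation
  have hfour : ∀ (n : ℤ) (θ : ℝ), (@fourier (2*Real.pi) n) (θ : AddCircle (2*Real.pi))
      = Complex.exp ((n:ℂ) * θ * Complex.I) := by
    intro n θ
    rw [fourier_coe_apply]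
    congr 1
    have hπ' : (Real.pi : ℂ) ≠ 0 := by exact_mod_cast Real.pi_ne_zero
    push_cast
    field_simp
  -- identification of coefficients
  have hcoeff : ∀ n : ℤ, c n = fCoeff f n := by
    intro n
    show fourierCoeff (⇑g) n = _
    rw [fourierCoeff_eq_intervalIntegral (⇑g) n 0, zero_add]
    rw [fCoeff]
    rw [intervalIntegral.integral_congr (g := fun θ : ℝ =>
      f (Complex.exp (θ * Complex.I)) * Complex.exp (-(n:ℂ) * θ * Complex.I))
      (fun θ _ => by
        rw [smul_eq_mul, hfour (-n) θ, hg θ, ← hFf θ]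
        push_cast
        ring)]
    rw [real_smul]
    push_cast
    ring
  -- pointwise Fourier expansion for any finite superset of the support
  have hsum : ∀ (s : Finset ℤ), (∀ n ∉ s, c n = 0) → ∀ θ : ℝ,
      Complex.exp (F θ * Complex.I) = ∑ n ∈ s, c n * Complex.exp (n * θ * Complex.I) := by
    intro s hs θ
    have hsummable : Summable c := summable_of_ne_finset_zero hs
    have h1 := has_pointwise_sum_fourier_series_of_summable (f := g) hsummable
      (θ : AddCircle (2*Real.pi))
    have h2 : HasSum (fun i => c i • fourier i (θ : AddCircle (2*Real.pi)))
        (∑ n ∈ s, c n • fourier n (θ : AddCircle (2*Real.pi))) :=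
      hasSum_sum_of_ne_finset_zero (by intro n hn; rw [hs n hn, zero_smul])
    have h3 := h1.unique h2
    rw [hg θ] at h3
    rw [h3]
    refine Finset.sum_congr rfl fun n _ => ?_
    rw [smul_eq_mul, hfour n θ]
  -- support is nonempty
  have hSne : ∃ n : ℤ, c n ≠ 0 := by
    by_contra h
    push_neg at h
    have := hsum ∅ (fun n _ => h n) 0
    simp at this
  -- extremal elements of the support
  obtain ⟨ub, hub⟩ := hbdd.1
  obtain ⟨lb, hlb⟩ := hbdd.2
  obtain ⟨b, hbS, hbmax⟩ := Int.exists_greatest_of_bdd (P := fun n => c n ≠ 0)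
    ⟨ub, fun z hz => hub (show fCoeff f z ≠ 0 by rw [← hcoeff z]; exact hz)⟩ hSne
  obtain ⟨a, haS, hamin⟩ := Int.exists_least_of_bdd (P := fun n => c n ≠ 0)
    ⟨lb, fun z hz => hlb (show fCoeff f z ≠ 0 by rw [← hcoeff z]; exact hz)⟩ hSne
  have hab : a ≤ b := hamin b hbS
  have hss : ∀ n ∉ Finset.Icc a b, c n = 0 := by
    intro n hn
    by_contra h
    have h1 := hamin n h
    have h2 := hbmax n h
    simp only [Finset.mem_Icc] at hn
    omega
  have key := hsum (Finset.Icc a b) hss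
  -- a = b
  have haeqb : a = b := by
    by_contra hne
    have hk : b - a ≠ 0 := by omega
    have horth := coeff_orth (Finset.Icc a b) c (b - a) hk (fun θ => by
      rw [← key θ, Complex.mul_conj, Complex.normSq_eq_norm_sq, Complex.norm_exp_ofReal_mul_I]
      norm_num)
    have heval : ∑ n ∈ Finset.Icc a b, ∑ m ∈ Finset.Icc a b,
        (if n - m = b - a then c n * conj (c m) else 0) = c b * conj (c a) := by
      rw [Finset.sum_eq_single b]
      · rw [Finset.sum_eq_single a]
        · rw [if_pos (by omega)]
        · intro m hm hma
          rw [if_neg]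
          simp only [Finset.mem_Icc] at hm
          omega
        · intro hbn
          exact absurd (Finset.mem_Icc.mpr ⟨hab, le_refl b⟩) (by simpa using hbn)
      · intro n hn hnb
        apply Finset.sum_eq_zero
        intro m hm
        rw [if_neg]
        simp only [Finset.mem_Icc] at hn hm
        omega
      · intro hbn
        exact absurd (Finset.mem_Icc.mpr ⟨hab, le_refl b⟩) hbn
    rw [heval] at horth
    rcases mul_eq_zero.mp horth with h | h
    · exact hbS h
    · exact haS (by simpa using h)
  -- single coefficient
  subst haeqb
  simp only [Finset.Icc_self, Finset.sum_singleton] at key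
  set γ : ℂ := c a with hγdef
  have hγ0 : Complex.exp (F 0 * Complex.I) = γ := by
    have := key 0
    simpa using this
  -- F is affine
  have hFθ : ∀ θ : ℝ, ∃ k : ℤ, (F θ - (a:ℝ) * θ) - (F 0 - (a:ℝ) * 0) = 2 * Real.pi * k := by
    intro θ
    have h1 : Complex.exp (F θ * Complex.I) = Complex.exp ((((a:ℝ) * θ + F 0 : ℝ)) * Complex.I) := by
      rw [key θ, ← hγ0]
      push_cast
      rw [add_mul, Complex.exp_add]
      ring_nf
    obtain ⟨k, hk⟩ := Complex.exp_eq_exp_iff_exists_int.mp h1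
    refine ⟨k, ?_⟩
    have him := congrArg Complex.im hk
    simp [Complex.mul_im] at him
    push_cast
    linarith
  have hFaff := const_of_int_valued (fun θ => F θ - (a:ℝ) * θ)
    (hFc.sub (continuous_const.mul continuous_id)) hFθ
  have ha1 : a = 1 := by
    have h1 := hFaff (2 * Real.pi)
    have h2 := hFp 0
    simp only [zero_add] at h2
    have h3 : F (2*Real.pi) - (a:ℝ) * (2*Real.pi) = F 0 - (a:ℝ) * 0 := h1
    rw [h2] at h3
    have : (a:ℝ) = 1 := by
      field_simp at h3
      nlinarith [Real.pi_ne_zero]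
    exact_mod_cast this
  subst ha1
  refine ⟨γ, ?_, ?_⟩
  · rw [← hγ0]
    rw [Complex.norm_exp_ofReal_mul_I]
  · intro z hz
    have hz1 : Complex.exp ((Complex.arg z : ℝ) * Complex.I) = z := by
      have := Complex.norm_mul_exp_arg_mul_I z
      rw [show ‖z‖ = 1 from hz] at this
      simpa using this
    rw [← hz1, hFf (Complex.arg z), key (Complex.arg z)]
    push_cast
    ring_nf
end

section
/- For every positive harmonic function h on the open unit disk 𝔻 and all z, w ∈ 𝔻, one has |h(z) − h(w)| ≤ (2|z − w| / ((1 − |z|)(1 − |w|))) · h(0). -/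
open Complex MeasureTheory

open Metric

/-- The Laplacian of `h : ℂ → ℝ` within a set, computed from the second iterated
derivative in the directions `1` and `I`. -/
noncomputable def lapWithin (h : ℂ → ℝ) (s : Set ℂ) (z : ℂ) : ℝ :=
  iteratedFDerivWithin ℝ 2 h s z ![1, 1] + iteratedFDerivWithin ℝ 2 h s z ![Complex.I, Complex.I]

noncomputable def philm : (ℂ →L[ℝ] ℝ) →L[ℝ] ℂ :=
  Complex.ofRealCLM.comp (ContinuousLinearMap.apply ℝ ℝ (1:ℂ)) -
    Complex.I • (Complex.ofRealCLM.comp (ContinuousLinearMap.apply ℝ ℝ (Complex.I)))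

lemma philm_apply (L : ℂ →L[ℝ] ℝ) : philm L = (L 1 : ℂ) - Complex.I * (L Complex.I : ℂ) := by
  simp [philm, smul_eq_mul]

lemma cr_step (h : ℂ → ℝ) (hsmooth : ContDiffOn ℝ 2 h (ball (0:ℂ) 1))
    (hharm : ∀ z ∈ ball (0:ℂ) 1, lapWithin h (ball (0:ℂ) 1) z = 0) :
    ∀ z ∈ ball (0:ℂ) 1, DifferentiableAt ℂ (fun z => philm (fderiv ℝ h z)) z := by
  set D : Set ℂ := ball (0:ℂ) 1 with hD
  have hDo : IsOpen D := isOpen_ball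
  have hDu : UniqueDiffOn ℝ D := hDo.uniqueDiffOn
  intro z hz
  have hmem : D ∈ nhds z := hDo.mem_nhds hz
  have hc2 : ContDiffAt ℝ 2 h z := hsmooth.contDiffAt hmem
  have hA1 : ContDiffAt ℝ 1 (fderiv ℝ h) z := hc2.fderiv_right (le_refl _)
  have hAd : DifferentiableAt ℝ (fderiv ℝ h) z := hA1.differentiableAt (by norm_num)
  have hB : HasFDerivAt (fderiv ℝ h) (fderiv ℝ (fderiv ℝ h) z) z := hAd.hasFDerivAt
  set B := fderiv ℝ (fderiv ℝ h) z with hBdef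
  have hev : ∀ᶠ y in nhds z, HasFDerivAt h (fderiv ℝ h y) y := by
    filter_upwards [hmem] with y hy
    exact ((hsmooth.contDiffAt (hDo.mem_nhds hy)).differentiableAt (by norm_num)).hasFDerivAt
  have hsymm : ∀ v w, B v w = B w v := fun v w =>
    second_derivative_symmetric_of_eventually hev hB v w
  have hlap : B 1 1 + B Complex.I Complex.I = 0 := by
    have h0 := hharm z hz
    rw [lapWithin, iteratedFDerivWithin_two_apply _ hDu hz,
      iteratedFDerivWithin_two_apply _ hDu hz] at h0
    have e1 : fderivWithin ℝ (fderivWithin ℝ h D) D z = B := by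
      have e2 : fderivWithin ℝ (fderivWithin ℝ h D) D z = fderivWithin ℝ (fderiv ℝ h) D z :=
        fderivWithin_congr (fun y hy => fderivWithin_of_isOpen hDo hy)
          (fderivWithin_of_isOpen hDo hz)
      rw [e2, fderivWithin_of_isOpen hDo hz]
    rw [e1] at h0
    simpa using h0
  have hFr : HasFDerivAt (fun z => philm (fderiv ℝ h z)) (philm.comp B) z :=
    (philm.hasFDerivAt).comp z hB
  rw [differentiableAt_iff_restrictScalars ℝ hFr.differentiableAt]
  refine ⟨(philm (B 1)) • (ContinuousLinearMap.id ℂ ℂ), ?_⟩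
  rw [hFr.fderiv]
  ext v
  have hv : v = (v.re : ℝ) • (1:ℂ) + (v.im : ℝ) • Complex.I := by
    apply Complex.ext <;> simp
  have hphiI : philm (B Complex.I) = Complex.I * philm (B 1) := by
    rw [philm_apply, philm_apply]
    have h1 : B Complex.I 1 = B 1 Complex.I := hsymm _ _
    have h2 : B Complex.I Complex.I = - B 1 1 := by linarith
    rw [h1, h2]
    apply Complex.ext <;> simp <;> ring
  have key : philm (B v) = philm (B 1) * v := by
    conv_lhs => rw [hv]
    conv_rhs => rw [hv]
    rw [map_add, _root_.map_smul, _root_.map_smul, map_add, _root_.map_smul, _root_.map_smul, hphiI]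
    simp only [Complex.real_smul]
    ring
  show philm (B 1) • v = philm (B v)
  rw [key, smul_eq_mul, mul_comm]

lemma prim_step (F : ℂ → ℂ) (hF : ∀ z ∈ ball (0:ℂ) 1, DifferentiableAt ℂ F z) (c : ℂ) :
    ∃ f : ℂ → ℂ, f 0 = c ∧ ∀ z ∈ ball (0:ℂ) 1, HasDerivAt f (F z) z := by
  have hFD : DifferentiableOn ℂ F (ball (0:ℂ) 1) :=
    fun z hz => (hF z hz).differentiableWithinAt
  have hball : ∀ (r : NNReal), 0 < r → (r:ℝ) < 1 →
      HasFPowerSeriesOnBall F (cauchyPowerSeries F 0 r) 0 r := by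
    intro r hr0 hr1
    exact DifferentiableOn.hasFPowerSeriesOnBall
      (hFD.mono (closedBall_subset_ball (by exact_mod_cast hr1))) hr0
  set p := cauchyPowerSeries F 0 ((1:NNReal)/2) with hp
  have hpr : ∀ (r : NNReal), 0 < r → (r:ℝ) < 1 → cauchyPowerSeries F 0 r = p := by
    intro r h0 h1
    exact (hball r h0 h1).hasFPowerSeriesAt.eq_formalMultilinearSeries
      ((hball ((1:NNReal)/2) (by norm_num) (by norm_num)).hasFPowerSeriesAt)
  have hrad : ∀ (r : NNReal), (r:ℝ) < 1 → (r : ENNReal) < p.radius := by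
    intro r hr1
    obtain ⟨r', h1, h2⟩ := exists_between hr1
    have hr'0 : 0 < r' := lt_of_le_of_lt r.coe_nonneg h1
    have hle := (hball ⟨r', hr'0.le⟩ (by exact_mod_cast hr'0) (by exact_mod_cast h2)).r_le
    rw [hpr ⟨r', hr'0.le⟩ (by exact_mod_cast hr'0) (by exact_mod_cast h2)] at hle
    refine lt_of_lt_of_le ?_ hle
    exact ENNReal.coe_lt_coe.2 (NNReal.coe_lt_coe.1 h1)
  set a : ℕ → ℂ := fun n => p.coeff n with ha
  have hFsum : ∀ z ∈ ball (0:ℂ) 1, HasSum (fun n => a n * z ^ n) (F z) := by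
    intro z hz
    have hz1 : ‖z‖ < 1 := mem_ball_zero_iff.1 hz
    obtain ⟨r, hr1, hr2⟩ := exists_between hz1
    have hr0 : 0 < r := lt_of_le_of_lt (norm_nonneg z) hr1
    have hs := (hball ⟨r, hr0.le⟩ (by exact_mod_cast hr0) (by exact_mod_cast hr2)).hasSum
      (y := z) ?_
    · rw [hpr ⟨r, hr0.le⟩ (by exact_mod_cast hr0) (by exact_mod_cast hr2)] at hs
      simp only [FormalMultilinearSeries.apply_eq_pow_smul_coeff, smul_eq_mul, zero_add] at hs
      convert hs using 2 with n
      · exact rfl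
      simp only [ha]
      ring
    · rw [EMetric.mem_ball, edist_zero_right]
      exact ENNReal.coe_lt_coe.2 (NNReal.coe_lt_coe.1 hr1)
  refine ⟨fun z => c + ∑' n, (a n / (n+1)) * z^(n+1), by simp, ?_⟩
  intro z hz
  have hz1 : ‖z‖ < 1 := mem_ball_zero_iff.1 hz
  obtain ⟨r, hr1, hr2⟩ := exists_between hz1
  obtain ⟨r', hr1', hr2'⟩ := exists_between hr2
  have hr0 : 0 < r := lt_of_le_of_lt (norm_nonneg z) hr1
  have hsumm : Summable (fun n => ‖p n‖ * r ^ n) := by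
    have := p.summable_norm_mul_pow (r := ⟨r, hr0.le⟩) (hrad ⟨r, hr0.le⟩ (by exact_mod_cast hr2))
    exact_mod_cast this
  have kd : HasDerivAt (fun z : ℂ => ∑' n, (a n / (n+1)) * z^(n+1)) (∑' n, a n * z ^ n) z := by
    refine hasDerivAt_tsum_of_isPreconnected hsumm isOpen_ball
      (convex_ball (0:ℂ) r).isPreconnected
      (g := fun n z => (a n / (n+1)) * z^(n+1)) (g' := fun n z => a n * z^n)
      (y₀ := 0) ?_ ?_ ?_ ?_ ?_
    · intro n y hy
      have h1 : HasDerivAt (fun z : ℂ => z^(n+1)) ((n+1 : ℕ) * y^n) y := hasDerivAt_pow (n+1) y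
      have h2 := h1.const_mul (a n / (n+1))
      refine h2.congr_deriv ?_
      push_cast
      have hne : ((n:ℂ) + 1) ≠ 0 := Nat.cast_add_one_ne_zero n
      field_simp
    · intro n y hy
      have hy' : ‖y‖ ≤ r := (mem_ball_zero_iff.1 hy).le
      have han : ‖a n‖ ≤ ‖p n‖ := by
        have h3 := (p n).le_opNorm (fun _ => (1:ℂ))
        simp only [norm_one, Finset.prod_const_one, mul_one] at h3
        exact h3
      calc ‖a n * y ^ n‖ = ‖a n‖ * ‖y‖ ^ n := by simp [norm_mul, norm_pow]
        _ ≤ ‖p n‖ * r ^ n := by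
            apply mul_le_mul han (pow_le_pow_left₀ (norm_nonneg y) hy' n) (by positivity)
              (norm_nonneg _)
    · exact mem_ball_zero_iff.2 (by simpa using hr0)
    · apply Summable.congr summable_zero
      intro n; simp
    · exact mem_ball_zero_iff.2 hr1
  have kd' := kd.const_add c
  rwa [(hFsum z hz).tsum_eq] at kd'

lemma clm_ext_complex {E : Type*} [NormedAddCommGroup E] [NormedSpace ℝ E]
    (L M : ℂ →L[ℝ] E) (h1 : L 1 = M 1) (hI : L Complex.I = M Complex.I) : L = M := by
  ext v
  have hv : v = (v.re : ℝ) • (1:ℂ) + (v.im : ℝ) • Complex.I := by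
    apply Complex.ext <;> simp
  rw [hv, map_add, map_add, _root_.map_smul, _root_.map_smul, _root_.map_smul, _root_.map_smul,
    h1, hI]

lemma exists_holo (h : ℂ → ℝ) (hsmooth : ContDiffOn ℝ 2 h (ball (0:ℂ) 1))
    (hharm : ∀ z ∈ ball (0:ℂ) 1, lapWithin h (ball (0:ℂ) 1) z = 0) :
    ∃ f : ℂ → ℂ, f 0 = (h 0 : ℂ) ∧ (∀ z ∈ ball (0:ℂ) 1, (f z).re = h z) ∧
      (∀ z ∈ ball (0:ℂ) 1, DifferentiableAt ℂ f z) := by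
  obtain ⟨f, hf0, hfd⟩ := prim_step _ (cr_step h hsmooth hharm) ((h 0 : ℂ))
  have hDo : IsOpen (ball (0:ℂ) 1) := isOpen_ball
  have hDu : UniqueDiffOn ℝ (ball (0:ℂ) 1) := hDo.uniqueDiffOn
  have h0m : (0:ℂ) ∈ ball (0:ℂ) 1 := mem_ball_self one_pos
  refine ⟨f, hf0, ?_, fun z hz => (hfd z hz).differentiableAt⟩
  intro z hz
  set u : ℂ → ℝ := fun z => (f z).re - h z with hu
  have hud : ∀ y ∈ ball (0:ℂ) 1, HasFDerivAt u (0 : ℂ →L[ℝ] ℝ) y := by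
    intro y hy
    have hfy : HasFDerivAt f (((1 : ℂ →L[ℂ] ℂ).smulRight (philm (fderiv ℝ h y))).restrictScalars ℝ) y :=
      (HasDerivAt.hasFDerivAt (hfd y hy)).restrictScalars ℝ
    have hre : HasFDerivAt (fun z => (f z).re)
        (Complex.reCLM.comp (((1 : ℂ →L[ℂ] ℂ).smulRight (philm (fderiv ℝ h y))).restrictScalars ℝ)) y :=
      (Complex.reCLM.hasFDerivAt).comp y hfy
    have hhy : HasFDerivAt h (fderiv ℝ h y) y :=
      ((hsmooth.contDiffAt (hDo.mem_nhds hy)).differentiableAt (by norm_num)).hasFDerivAt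
    have heq : Complex.reCLM.comp (((1 : ℂ →L[ℂ] ℂ).smulRight (philm (fderiv ℝ h y))).restrictScalars ℝ)
        = fderiv ℝ h y := by
      apply clm_ext_complex
      · simp [philm_apply]
      · simp [philm_apply, Complex.ext_iff]
    have := hre.sub hhy
    rw [heq, sub_self] at this
    exact this
  have hconst : u z = u 0 := by
    apply Convex.is_const_of_fderivWithin_eq_zero (convex_ball (0:ℂ) 1)
      (fun y hy => ((hud y hy).differentiableAt).differentiableWithinAt) ?_ hz h0m
    intro y hy
    rw [fderivWithin_of_isOpen hDo hy, (hud y hy).fderiv]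
  have : u 0 = 0 := by simp [hu, hf0]
  have h2 : u z = 0 := by rw [hconst, this]
  simpa [hu, sub_eq_zero] using h2

lemma harnack_upper (f : ℂ → ℂ) (c : ℝ) (hc : 0 < c)
    (hfd : ∀ z ∈ ball (0:ℂ) 1, DifferentiableAt ℂ f z)
    (hre : ∀ z ∈ ball (0:ℂ) 1, 0 < (f z).re) (hf0 : f 0 = (c:ℂ))
    (z : ℂ) (hz : z ∈ ball (0:ℂ) 1) :
    (f z).re ≤ c * (1 + ‖z‖) / (1 - ‖z‖) := by
  have hden : ∀ x ∈ ball (0:ℂ) 1, f x + (c:ℂ) ≠ 0 := by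
    intro x hx hcon
    have : (f x + (c:ℂ)).re = 0 := by rw [hcon]; simp
    simp only [Complex.add_re, Complex.ofReal_re] at this
    have := hre x hx
    linarith
  set g : ℂ → ℂ := fun x => (f x - c) / (f x + c) with hg
  have hgd : DifferentiableOn ℂ g (ball (0:ℂ) 1) := by
    apply DifferentiableOn.div
    · exact DifferentiableOn.sub (fun x hx => (hfd x hx).differentiableWithinAt)
        (differentiableOn_const _)
    · exact DifferentiableOn.add (fun x hx => (hfd x hx).differentiableWithinAt)
        (differentiableOn_const _)
    · exact hden
  have hmaps : Set.MapsTo g (ball (0:ℂ) 1) (ball (0:ℂ) 1) := by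
    intro x hx
    rw [mem_ball_zero_iff]
    have h1 : ‖f x - c‖ < ‖f x + c‖ := by
      have e1 : ‖f x - c‖^2 < ‖f x + c‖^2 := by
        rw [Complex.sq_norm, Complex.sq_norm, Complex.normSq_apply, Complex.normSq_apply]
        simp only [Complex.sub_re, Complex.sub_im, Complex.add_re, Complex.add_im,
          Complex.ofReal_re, Complex.ofReal_im]
        nlinarith [hre x hx]
      nlinarith [norm_nonneg (f x - (c:ℂ)), norm_nonneg (f x + (c:ℂ))]
    rw [hg]
    simp only [norm_div]
    rw [div_lt_one (lt_of_le_of_lt (norm_nonneg _) h1)]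
    exact h1
  have hg0 : g 0 = 0 := by simp [hg, hf0]
  have hzn : ‖z‖ < 1 := mem_ball_zero_iff.1 hz
  have hschwarz : ‖g z‖ ≤ ‖z‖ := by
    apply Complex.norm_le_norm_of_mapsTo_ball hgd (hmaps.mono_right ball_subset_closedBall) hg0
    simpa using hzn
  have hgz : ‖g z‖ ≤ ‖z‖ := by simpa using hschwarz
  have hgz1 : ‖g z‖ < 1 := lt_of_le_of_lt hgz hzn
  -- f z = c (1 + g z)/(1 - g z)
  have hkey : f z * (1 - g z) = c * (1 + g z) := by
    have : g z * (f z + c) = f z - c := div_mul_cancel₀ _ (hden z hz)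
    ring_nf
    ring_nf at this
    linear_combination -this
  have h1g : (1 : ℂ) - g z ≠ 0 := by
    intro hcon
    have he : g z = 1 := by linear_combination -hcon
    rw [he] at hgz1
    simp at hgz1
  have hfz : f z = c * (1 + g z) / (1 - g z) := by
    field_simp
    linear_combination hkey
  have hre_le : (f z).re ≤ ‖f z‖ := Complex.re_le_norm (f z)
  have hnorm : ‖f z‖ ≤ c * (1 + ‖g z‖) / (1 - ‖g z‖) := by
    rw [hfz, norm_div, norm_mul]
    have hn1 : ‖(1:ℂ) + g z‖ ≤ 1 + ‖g z‖ := by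
      simpa using norm_add_le (1:ℂ) (g z)
    have hn2 : (1:ℝ) - ‖g z‖ ≤ ‖(1:ℂ) - g z‖ := by
      simpa using norm_sub_norm_le (1:ℂ) (g z)
    have hp : (0:ℝ) < 1 - ‖g z‖ := by linarith
    have hcn : ‖(c:ℂ)‖ = c := by
      simp [abs_of_pos hc]
    rw [hcn]
    apply div_le_div₀ (by positivity) (by nlinarith) (by linarith) hn2
  have hmono : c * (1 + ‖g z‖) / (1 - ‖g z‖) ≤ c * (1 + ‖z‖) / (1 - ‖z‖) := by
    rw [div_le_div_iff₀ (by linarith) (by linarith)]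
    nlinarith
  linarith

lemma normSq_lt_one {x : ℂ} (hx : ‖x‖ < 1) : x.re * x.re + x.im * x.im < 1 := by
  have h1 : Complex.normSq x < 1 := by
    rw [← Complex.sq_norm]
    nlinarith [norm_nonneg x]
  simpa [Complex.normSq_apply] using h1

lemma deriv_bound (f : ℂ → ℂ) (c : ℝ) (hc : 0 < c)
    (hfd : ∀ z ∈ ball (0:ℂ) 1, DifferentiableAt ℂ f z)
    (hre : ∀ z ∈ ball (0:ℂ) 1, 0 < (f z).re) (hf0 : f 0 = (c:ℂ))
    (ζ : ℂ) (hζ : ζ ∈ ball (0:ℂ) 1) :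
    ‖deriv f ζ‖ ≤ 2 * c / (1 - ‖ζ‖)^2 := by
  have hζn : ‖ζ‖ < 1 := mem_ball_zero_iff.1 hζ
  set a : ℂ := f ζ with haa
  have ha_re : 0 < a.re := hre ζ hζ
  set m : ℂ → ℂ := fun x => (x + ζ) / (1 + (starRingEnd ℂ) ζ * x) with hm
  have hm_den : ∀ x ∈ ball (0:ℂ) 1, (1 + (starRingEnd ℂ) ζ * x) ≠ 0 := by
    intro x hx hcon
    have hxn : ‖x‖ < 1 := mem_ball_zero_iff.1 hx
    have h1 : ‖(starRingEnd ℂ) ζ * x‖ < 1 := by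
      rw [norm_mul, RCLike.norm_conj]
      nlinarith [norm_nonneg x, norm_nonneg ζ]
    have h2 : (starRingEnd ℂ) ζ * x = -1 := by linear_combination hcon
    rw [h2] at h1
    simp at h1
  have hm_maps : Set.MapsTo m (ball (0:ℂ) 1) (ball (0:ℂ) 1) := by
    intro x hx
    have hxn : ‖x‖ < 1 := mem_ball_zero_iff.1 hx
    have hxs := normSq_lt_one hxn
    have hζs := normSq_lt_one hζn
    rw [mem_ball_zero_iff]
    have key : ‖x + ζ‖^2 < ‖1 + (starRingEnd ℂ) ζ * x‖^2 := by
      rw [Complex.sq_norm, Complex.sq_norm, Complex.normSq_apply, Complex.normSq_apply]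
      simp only [Complex.add_re, Complex.add_im, Complex.mul_re, Complex.mul_im,
        Complex.one_re, Complex.one_im, Complex.conj_re, Complex.conj_im]
      nlinarith [mul_pos (sub_pos.2 hxs) (sub_pos.2 hζs)]
    have hd0 : (0:ℝ) < ‖1 + (starRingEnd ℂ) ζ * x‖ := norm_pos_iff.2 (hm_den x hx)
    rw [hm, norm_div, div_lt_one hd0]
    nlinarith [norm_nonneg (x + ζ)]
  have hm0 : m 0 = ζ := by simp [hm]
  -- denominators for μ ∘ f
  have hμ_den : ∀ w : ℂ, 0 < w.re → w + (starRingEnd ℂ) a ≠ 0 := by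
    intro w hw hcon
    have : (w + (starRingEnd ℂ) a).re = 0 := by rw [hcon]; simp
    simp only [Complex.add_re, Complex.conj_re] at this
    linarith
  set μ : ℂ → ℂ := fun w => (w - a) / (w + (starRingEnd ℂ) a) with hμ
  set Φ : ℂ → ℂ := μ ∘ (f ∘ m) with hΦ
  have hΦd : DifferentiableOn ℂ Φ (ball (0:ℂ) 1) := by
    intro x hx
    have hmx : m x ∈ ball (0:ℂ) 1 := hm_maps hx
    have hmd : DifferentiableWithinAt ℂ m (ball (0:ℂ) 1) x := by
      apply DifferentiableWithinAt.div
      · exact (differentiableWithinAt_id.add (differentiableWithinAt_const ζ))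
      · exact ((differentiableWithinAt_const _).mul differentiableWithinAt_id).const_add 1
      · exact hm_den x hx
    have hfmd : DifferentiableWithinAt ℂ (f ∘ m) (ball (0:ℂ) 1) x :=
      ((hfd (m x) hmx).differentiableWithinAt).comp x hmd hm_maps
    apply DifferentiableWithinAt.div
    · exact hfmd.sub (differentiableWithinAt_const _)
    · exact hfmd.add (differentiableWithinAt_const _)
    · exact hμ_den _ (hre (m x) hmx)
  have hΦmaps : Set.MapsTo Φ (ball (0:ℂ) 1) (ball (0:ℂ) 1) := by
    intro x hx
    have hmx : m x ∈ ball (0:ℂ) 1 := hm_maps hx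
    have hwre : 0 < (f (m x)).re := hre (m x) hmx
    rw [mem_ball_zero_iff]
    set w := f (m x)
    have key : ‖w - a‖^2 < ‖w + (starRingEnd ℂ) a‖^2 := by
      rw [Complex.sq_norm, Complex.sq_norm, Complex.normSq_apply, Complex.normSq_apply]
      simp only [Complex.sub_re, Complex.sub_im, Complex.add_re, Complex.add_im,
        Complex.conj_re, Complex.conj_im]
      nlinarith [mul_pos hwre ha_re]
    have hd0 : (0:ℝ) < ‖w + (starRingEnd ℂ) a‖ := norm_pos_iff.2 (hμ_den w hwre)
    show ‖(w - a) / (w + (starRingEnd ℂ) a)‖ < 1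
    rw [norm_div, div_lt_one hd0]
    nlinarith [norm_nonneg (w - a)]
  have hΦ0 : Φ 0 = 0 := by
    simp only [hΦ, Function.comp_apply, hm0, hμ]
    simp [haa]
  -- Schwarz
  have hSch : ‖deriv Φ 0‖ ≤ 1 := by
    have h0b : (0:ℂ) ∈ ball (0:ℂ) 1 := mem_ball_self one_pos
    have := Complex.norm_deriv_le_div_of_mapsTo_ball hΦd (R₂ := 1) (by rw [hΦ0]; exact hΦmaps.mono_right ball_subset_closedBall) one_pos
    simpa using this
  -- chain rule
  have hane : a + (starRingEnd ℂ) a ≠ 0 := hμ_den a ha_re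
  have hmd0 : HasDerivAt m (1 - ζ * (starRingEnd ℂ) ζ) 0 := by
    have hu : HasDerivAt (fun x : ℂ => x + ζ) 1 0 := (hasDerivAt_id 0).add_const ζ
    have hv : HasDerivAt (fun x : ℂ => 1 + (starRingEnd ℂ) ζ * x) ((starRingEnd ℂ) ζ) 0 := by
      simpa using (((hasDerivAt_id (0:ℂ)).const_mul ((starRingEnd ℂ) ζ)).const_add 1)
    have := hu.div hv (by simpa using hm_den 0 (mem_ball_self one_pos))
    refine this.congr_deriv ?_
    simp
  have hfd' : HasDerivAt f (deriv f ζ) ζ := (hfd ζ hζ).hasDerivAt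
  have hμd : HasDerivAt μ (a + (starRingEnd ℂ) a)⁻¹ a := by
    have hu : HasDerivAt (fun w : ℂ => w - a) 1 a := (hasDerivAt_id a).sub_const a
    have hv : HasDerivAt (fun w : ℂ => w + (starRingEnd ℂ) a) 1 a :=
      (hasDerivAt_id a).add_const _
    have := hu.div hv hane
    refine this.congr_deriv ?_
    field_simp
    ring
  have hΦder : HasDerivAt Φ ((a + (starRingEnd ℂ) a)⁻¹ * (deriv f ζ * (1 - ζ * (starRingEnd ℂ) ζ))) 0 := by
    have h1 : HasDerivAt (f ∘ m) (deriv f ζ * (1 - ζ * (starRingEnd ℂ) ζ)) 0 :=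
      HasDerivAt.comp 0 (by rwa [hm0]) hmd0
    have h2 : HasDerivAt (μ ∘ (f ∘ m)) _ 0 :=
      HasDerivAt.comp 0 (by rw [Function.comp_apply, hm0]; exact hμd) h1
    exact h2
  have hval : deriv Φ 0 = (a + (starRingEnd ℂ) a)⁻¹ * (deriv f ζ * (1 - ζ * (starRingEnd ℂ) ζ)) :=
    hΦder.deriv
  -- norms
  have hconj : a + (starRingEnd ℂ) a = ((2 * a.re : ℝ) : ℂ) := by
    rw [Complex.add_conj]
  have hnorm1 : ‖(a + (starRingEnd ℂ) a)⁻¹‖ = (2 * a.re)⁻¹ := by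
    rw [hconj, norm_inv, Complex.norm_real, Real.norm_eq_abs, abs_of_pos (by linarith)]
  have hnorm2 : ‖(1 : ℂ) - ζ * (starRingEnd ℂ) ζ‖ = 1 - ‖ζ‖^2 := by
    rw [Complex.mul_conj]
    have : ((1:ℂ) - (Complex.normSq ζ : ℂ)) = (((1 - ‖ζ‖^2 : ℝ)) : ℂ) := by
      rw [Complex.normSq_eq_norm_sq]
      push_cast
      ring
    rw [this, Complex.norm_real, Real.norm_eq_abs, abs_of_pos (by nlinarith [norm_nonneg ζ])]
  have hmain : ‖deriv f ζ‖ * (1 - ‖ζ‖^2) ≤ 2 * a.re := by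
    have := hSch
    rw [hval, norm_mul, norm_mul, hnorm1, hnorm2] at this
    rw [inv_mul_le_iff₀ (by linarith)] at this
    linarith [this]
  -- combine with Harnack
  have hhar : a.re ≤ c * (1 + ‖ζ‖) / (1 - ‖ζ‖) := harnack_upper f c hc hfd hre hf0 ζ hζ
  have hhar' : a.re * (1 - ‖ζ‖) ≤ c * (1 + ‖ζ‖) := by
    rw [← le_div_iff₀ (by linarith)]
    exact hhar
  rw [le_div_iff₀ (by nlinarith)]
  nlinarith [norm_nonneg (deriv f ζ), norm_nonneg ζ, hmain, hhar',
    mul_le_mul_of_nonneg_right hmain (by linarith : (0:ℝ) ≤ 1 - ‖ζ‖)]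

/-- additive Harnack inequality for positive harmonic functions on the
unit disk: `|h(z) − h(w)| ≤ 2|z − w| h(0) / ((1 − |z|)(1 − |w|))`. -/
theorem additive_harnack
    (h : ℂ → ℝ)
    (hsmooth : ContDiffOn ℝ 2 h (Metric.ball (0 : ℂ) 1))
    (hharm : ∀ z ∈ Metric.ball (0 : ℂ) 1, lapWithin h (Metric.ball (0 : ℂ) 1) z = 0)
    (hpos : ∀ z ∈ Metric.ball (0 : ℂ) 1, 0 < h z)
    (z w : ℂ) (hz : z ∈ Metric.ball (0 : ℂ) 1) (hw : w ∈ Metric.ball (0 : ℂ) 1) :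
    |h z - h w| ≤ 2 * ‖z - w‖ / ((1 - ‖z‖) * (1 - ‖w‖)) * h 0 := by
  obtain ⟨f, hf0, hfre, hfdiff⟩ := exists_holo h hsmooth hharm
  have h0D : (0:ℂ) ∈ ball (0:ℂ) 1 := mem_ball_self one_pos
  set c : ℝ := h 0 with hcdef
  have hc : 0 < c := hpos 0 h0D
  have hre : ∀ x ∈ ball (0:ℂ) 1, 0 < (f x).re := fun x hx => by
    rw [hfre x hx]; exact hpos x hx
  have hdb : ∀ ζ ∈ ball (0:ℂ) 1, ‖deriv f ζ‖ ≤ 2*c/(1-‖ζ‖)^2 :=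
    fun ζ hζ => deriv_bound f c hc hfdiff hre hf0 ζ hζ
  set A : ℝ := 1 - ‖z‖ with hAdef
  set B : ℝ := 1 - ‖w‖ with hBdef
  have hzn : ‖z‖ < 1 := mem_ball_zero_iff.1 hz
  have hwn : ‖w‖ < 1 := mem_ball_zero_iff.1 hw
  have hA : 0 < A := by rw [hAdef]; linarith
  have hB : 0 < B := by rw [hBdef]; linarith
  clear_value A B
  set γ : ℝ → ℂ := fun t => z + t • (w - z) with hγdef
  have hγeq : ∀ t : ℝ, γ t = (1-t) • z + t • w := by
    intro t
    simp only [hγdef]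
    rw [smul_sub, sub_smul, one_smul]
    ring
  have hγnorm : ∀ t ∈ Set.Icc (0:ℝ) 1, ‖γ t‖ ≤ 1 - (A + t*(B-A)) := by
    intro t ht
    rw [hγeq t]
    calc ‖(1-t) • z + t • w‖ ≤ ‖(1-t) • z‖ + ‖t • w‖ := norm_add_le _ _
      _ = (1-t) * ‖z‖ + t * ‖w‖ := by
          rw [norm_smul, norm_smul, Real.norm_eq_abs, Real.norm_eq_abs,
            _root_.abs_of_nonneg (by linarith [ht.2]), _root_.abs_of_nonneg ht.1]
      _ ≤ 1 - (A + t*(B-A)) := by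
          simp only [hAdef, hBdef]
          ring_nf
          nlinarith [ht.1, ht.2]
  have hABt : ∀ t ∈ Set.Icc (0:ℝ) 1, 0 < A + t*(B-A) := by
    intro t ht
    have hmin : 0 < min A B := lt_min hA hB
    have h1 : (1-t)*(min A B) + t*(min A B) ≤ (1-t)*A + t*B := by
      apply add_le_add
      · exact mul_le_mul_of_nonneg_left (min_le_left A B) (by linarith [ht.2])
      · exact mul_le_mul_of_nonneg_left (min_le_right A B) ht.1
    nlinarith [h1, hmin]
  have hγmem : ∀ t ∈ Set.Icc (0:ℝ) 1, γ t ∈ ball (0:ℂ) 1 := by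
    intro t ht
    rw [mem_ball_zero_iff]
    have := hγnorm t ht
    have := hABt t ht
    linarith
  have huIcc : Set.uIcc (0:ℝ) 1 = Set.Icc 0 1 := Set.uIcc_of_le zero_le_one
  have hγd : ∀ t : ℝ, HasDerivAt γ (w - z) t := by
    intro t
    simpa [hγdef] using ((hasDerivAt_id t).smul_const (w-z)).const_add z
  have hder : ∀ t ∈ Set.uIcc (0:ℝ) 1, HasDerivAt (f ∘ γ) ((w - z) • deriv f (γ t)) t := by
    intro t ht
    rw [huIcc] at ht
    have hft : HasDerivAt f (deriv f (γ t)) (γ t) := (hfdiff _ (hγmem t ht)).hasDerivAt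
    exact HasDerivAt.scomp t hft (hγd t)
  have hdc : ContinuousOn (deriv f) (ball (0:ℂ) 1) := by
    have hdo : DifferentiableOn ℂ f (ball (0:ℂ) 1) :=
      fun x hx => (hfdiff x hx).differentiableWithinAt
    exact ((hdo.analyticOnNhd isOpen_ball).deriv).continuousOn
  have hγcont : Continuous γ := by
    apply continuous_const.add
    exact (continuous_id.smul continuous_const)
  have hcont : ContinuousOn (fun t => (w-z) • deriv f (γ t)) (Set.uIcc (0:ℝ) 1) := by
    apply ContinuousOn.fun_smul continuousOn_const
    apply hdc.comp hγcont.continuousOn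
    rw [huIcc]
    exact hγmem
  have hFTC : ∫ t in (0:ℝ)..1, (w-z) • deriv f (γ t) = f w - f z := by
    have := intervalIntegral.integral_eq_sub_of_hasDerivAt hder
      (hcont.intervalIntegrable)
    rw [this]
    simp only [Function.comp_apply, hγdef]
    norm_num
  -- the bound function and its integral
  set gbd : ℝ → ℝ := fun t => (2*c*‖w-z‖) * ((A + t*(B-A))^2)⁻¹ with hgbddef
  have hgbdcont : ContinuousOn gbd (Set.uIcc (0:ℝ) 1) := by
    apply ContinuousOn.mul continuousOn_const
    apply ContinuousOn.inv₀
    · exact ((continuous_const.add (continuous_id.mul continuous_const)).pow 2).continuousOn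
    · intro t ht
      rw [huIcc] at ht
      exact pow_ne_zero 2 (ne_of_gt (hABt t ht))
  have hgint : ∫ t in (0:ℝ)..1, gbd t = 2*c*‖w-z‖/(A*B) := by
    have hprim : ∀ t ∈ Set.uIcc (0:ℝ) 1,
        HasDerivAt (fun t => (2*c*‖w-z‖) * (t/(A*(A+t*(B-A))))) (gbd t) t := by
      intro t ht
      rw [huIcc] at ht
      have hv0 : A*(A+t*(B-A)) ≠ 0 := ne_of_gt (mul_pos hA (hABt t ht))
      have hu : HasDerivAt (fun t : ℝ => t) 1 t := hasDerivAt_id t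
      have hv : HasDerivAt (fun t : ℝ => A*(A+t*(B-A))) (A*(B-A)) t := by
        have h7 := (((hasDerivAt_id t).const_mul (B-A)).const_add A).const_mul A
        simp only [mul_one] at h7
        have heq : (fun y : ℝ => A*(A+y*(B-A))) = (fun y : ℝ => A*(A+(B-A)*(id y))) := by
          funext y; simp only [id]; ring
        rw [heq]
        exact h7
      have hdiv := (hu.div hv hv0).const_mul (2*c*‖w-z‖)
      refine hdiv.congr_deriv ?_
      rw [hgbddef]
      have hD1 : A + t*(B-A) ≠ 0 := ne_of_gt (hABt t ht)
      have key : (1 * (A*(A+t*(B-A))) - t*(A*(B-A))) / (A*(A+t*(B-A)))^2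
          = ((A+t*(B-A))^2)⁻¹ := by
        rw [inv_eq_one_div, div_eq_div_iff (by positivity) (by positivity)]
        ring
      rw [key]
    rw [intervalIntegral.integral_eq_sub_of_hasDerivAt hprim (hgbdcont.intervalIntegrable)]
    rw [show A + 1*(B-A) = B by ring]
    rw [zero_div, mul_zero, sub_zero, one_div, ← div_eq_mul_inv]
  have hbnd : ‖f w - f z‖ ≤ 2*c*‖w-z‖/(A*B) := by
    rw [← hFTC]
    have hle : ∀ᵐ t ∂(volume.restrict (Set.uIoc (0:ℝ) 1)),
        ‖(w-z) • deriv f (γ t)‖ ≤ gbd t := by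
      rw [ae_restrict_iff' measurableSet_uIoc]
      apply ae_of_all
      intro t ht
      have ht' : t ∈ Set.Icc (0:ℝ) 1 := by
        rw [Set.uIoc_of_le zero_le_one] at ht
        exact ⟨ht.1.le, ht.2⟩
      have h1 := hdb (γ t) (hγmem t ht')
      have h2 := hγnorm t ht'
      have h3 := hABt t ht'
      rw [norm_smul]
      have h4 : 2*c/(1-‖γ t‖)^2 ≤ 2*c/(A + t*(B-A))^2 := by
        apply div_le_div_of_nonneg_left (by linarith) (by positivity)
        nlinarith [norm_nonneg (γ t)]
      calc ‖w-z‖ * ‖deriv f (γ t)‖ ≤ ‖w-z‖ * (2*c/(A + t*(B-A))^2) := by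
            apply mul_le_mul_of_nonneg_left (le_trans h1 h4) (norm_nonneg _)
        _ = gbd t := by rw [hgbddef]; field_simp
    refine le_trans (intervalIntegral.norm_integral_le_of_norm_le zero_le_one
      (by rw [← Set.uIoc_of_le zero_le_one]; exact (ae_restrict_iff' measurableSet_uIoc).1 hle)
      (hgbdcont.intervalIntegrable)) ?_
    rw [hgint]
  -- finish
  have hdiff : h z - h w = (f z - f w).re := by
    rw [Complex.sub_re, hfre z hz, hfre w hw]
  rw [hdiff]
  have h5 : |(f z - f w).re| ≤ ‖f z - f w‖ := Complex.abs_re_le_norm _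
  have h6 : ‖f z - f w‖ = ‖f w - f z‖ := norm_sub_rev _ _
  rw [h6] at h5
  apply le_trans h5
  apply le_trans hbnd
  rw [norm_sub_rev]
  apply le_of_eq
  rw [hcdef, hAdef, hBdef]
  ring
end

section
/- Let h : 𝕋 → ℝ be continuous with ∫₀^{2π} h(e^{iθ}) dθ = 0. Then for every ε > 0 there exist n ∈ ℕ and points z₁,…,z_n, w₁,…,w_n ∈ 𝔻 such that |h(ζ) − ∑_{k=1}^{n} P(z_k, ζ) + ∑_{k=1}^{n} P(w_k, ζ)| < ε for all ζ ∈ 𝕋. -/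
open Complex MeasureTheory intervalIntegral

/-- The Poisson kernel of the unit disk. -/
noncomputable def poissonK (z ζ : ℂ) : ℝ := (1 - ‖z‖ ^ 2) / ‖ζ - z‖ ^ 2

lemma norm_sq_normSq (w : ℂ) : ‖w‖^2 = Complex.normSq w := by
  rw [Complex.sq_norm]

lemma poissonK_zero (ζ : ℂ) (hζ : ‖ζ‖ = 1) : poissonK 0 ζ = 1 := by
  simp [poissonK, hζ]

lemma poisson_aux (u : ℂ) (hu1 : ‖u‖ < 1) :
    (1 - ‖u‖^2)/‖1-u‖^2 = 1 + 2*(u/(1-u)).re := by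
  have h1u : (1:ℂ) - u ≠ 0 := by
    intro hh
    rw [sub_eq_zero] at hh
    rw [← hh] at hu1
    simp at hu1
  have hN : Complex.normSq (1-u) ≠ 0 := ne_of_gt (Complex.normSq_pos.mpr h1u)
  rw [norm_sq_normSq, norm_sq_normSq, Complex.div_re]
  simp only [Complex.normSq_apply, Complex.sub_re, Complex.sub_im, Complex.one_re,
    Complex.one_im] at hN ⊢
  have hN' : 1 - u.re*2 + u.re^2 + u.im^2 ≠ 0 := by
    rw [show (1 - u.re*2 + u.re^2 + u.im^2) = (1-u.re)*(1-u.re)+(0-u.im)*(0-u.im) from by ring]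
    exact hN
  field_simp [hN']
  linear_combination mul_inv_cancel₀ hN'

lemma conj_mul_self (ζ : ℂ) (hζ : ‖ζ‖ = 1) : ζ * (starRingEnd ℂ) ζ = 1 := by
  rw [Complex.mul_conj]
  norm_cast
  rw [← norm_sq_normSq, hζ]
  norm_num

lemma poissonK_formula (z ζ : ℂ) (hζ : ‖ζ‖ = 1) (hz : ‖z‖ < 1) :
    poissonK z ζ = 1 + 2 * ((z * (starRingEnd ℂ) ζ) / (1 - z * (starRingEnd ℂ) ζ)).re := by
  have hcu : ‖(starRingEnd ℂ) ζ‖ = 1 := by rw [RCLike.norm_conj, hζ]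
  have hu : ‖z * (starRingEnd ℂ) ζ‖ < 1 := by rw [norm_mul, hcu, mul_one]; exact hz
  have hζ1 : ζ * (starRingEnd ℂ) ζ = 1 := conj_mul_self ζ hζ
  have hfac : ζ - z = ζ * (1 - z * (starRingEnd ℂ) ζ) := by linear_combination z * hζ1
  have hnz : ‖z‖^2 = ‖z * (starRingEnd ℂ) ζ‖^2 := by rw [norm_mul, hcu, mul_one]
  rw [poissonK, hfac, norm_mul, hζ, one_mul, hnz, poisson_aux _ hu]

lemma summable_shift (v : ℂ) (hv : ‖v‖ < 1) : Summable (fun t : ℕ => v^(t+1)) := by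
  simpa [pow_succ, mul_comm] using (summable_geometric_of_norm_lt_one hv).mul_left v

lemma geom_shift (v : ℂ) (hv : ‖v‖ < 1) : ∑' t : ℕ, v^(t+1) = v / (1 - v) := by
  calc ∑' t:ℕ, v^(t+1) = ∑' t:ℕ, v * v^t := by
        congr 1; funext t; rw [pow_succ, mul_comm]
  _ = v * (1-v)⁻¹ := by rw [tsum_mul_left, tsum_geometric_of_norm_lt_one hv]
  _ = v/(1-v) := (div_eq_mul_inv _ _).symm

lemma root_sum (k : ℕ) (hk : k ≠ 0) (m : ℕ) :
    ∑ j ∈ Finset.range k, (Complex.exp (2*Real.pi*Complex.I/k))^(m*j)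
      = if k ∣ m then (k:ℂ) else 0 := by
  have hω : IsPrimitiveRoot (Complex.exp (2*Real.pi*Complex.I/k)) k :=
    Complex.isPrimitiveRoot_exp k hk
  set ω := Complex.exp (2*Real.pi*Complex.I/k)
  have hrw : ∀ j, ω^(m*j) = (ω^m)^j := fun j => by rw [pow_mul]
  simp only [hrw]
  by_cases hd : k ∣ m
  · have h1 : ω^m = 1 := (hω.pow_eq_one_iff_dvd m).mpr hd
    simp [h1, hd]
  · have h1 : ω^m ≠ 1 := fun hh => hd ((hω.pow_eq_one_iff_dvd m).mp hh)
    rw [geom_sum_eq h1, if_neg hd]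
    have : (ω^m)^k = 1 := by
      rw [← pow_mul, mul_comm, pow_mul, hω.pow_eq_one, one_pow]
    rw [this]
    simp

lemma cluster_sum (k : ℕ) (hk : k ≠ 0) (u : ℂ) (hu : ‖u‖ < 1) :
    ∑ j ∈ Finset.range k,
        (u * (Complex.exp (2*Real.pi*Complex.I/k))^j) / (1 - u * (Complex.exp (2*Real.pi*Complex.I/k))^j)
      = k * u^k / (1 - u^k) := by
  have hω : IsPrimitiveRoot (Complex.exp (2*Real.pi*Complex.I/k)) k :=
    Complex.isPrimitiveRoot_exp k hk
  set ω := Complex.exp (2*Real.pi*Complex.I/k) with hω_def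
  have hωn : ‖ω‖ = 1 := by
    have : (2*Real.pi*Complex.I/k) = ((2*Real.pi/k : ℝ) : ℂ) * Complex.I := by
      push_cast; ring
    rw [hω_def, this, Complex.norm_exp_ofReal_mul_I]
  have hnj : ∀ j : ℕ, ‖u * ω^j‖ < 1 := fun j => by
    rw [norm_mul, norm_pow, hωn, one_pow, mul_one]; exact hu
  -- replace each term by a tsum
  have h1 : ∀ j ∈ Finset.range k, (u * ω^j)/(1 - u*ω^j) = ∑' t : ℕ, (u*ω^j)^(t+1) :=
    fun j _ => (geom_shift _ (hnj j)).symm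
  rw [Finset.sum_congr rfl h1, ← Summable.tsum_finsetSum (fun j _ => summable_shift _ (hnj j))]
  have h2 : ∀ t : ℕ, ∑ j ∈ Finset.range k, (u*ω^j)^(t+1)
      = u^(t+1) * (if k ∣ (t+1) then (k:ℂ) else 0) := by
    intro t
    rw [← root_sum k hk (t+1)]
    rw [Finset.mul_sum]
    refine Finset.sum_congr rfl fun j _ => ?_
    rw [mul_pow, ← pow_mul, mul_comm j (t+1)]
  simp only [h2]
  -- reindex
  have hk1 : 1 ≤ k := Nat.one_le_iff_ne_zero.mpr hk
  have huk : ‖u^k‖ < 1 := by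
    rw [norm_pow]
    exact pow_lt_one₀ (norm_nonneg u) hu hk
  have key : ∑' t : ℕ, u^(t+1) * (if k ∣ (t+1) then (k:ℂ) else 0)
      = ∑' s : ℕ, (k:ℂ) * (u^k)^(s+1) := by
    apply tsum_eq_tsum_of_ne_zero_bij (fun s => k * ((s : ℕ)) + k - 1)
    · intro a b hab
      apply Subtype.ext
      apply Nat.eq_of_mul_eq_mul_left (Nat.pos_of_ne_zero hk)
      simp only at hab
      omega
    · intro t ht
      simp only [Function.mem_support, ne_eq] at ht
      have hune : u ≠ 0 := by
        rintro rfl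
        simp [zero_pow] at ht
      have hdvd : k ∣ (t+1) := by
        by_contra hc
        simp [hc] at ht
      obtain ⟨m, hm⟩ := hdvd
      rcases m with _ | m'
      · simp at hm
      refine ⟨⟨m', ?_⟩, ?_⟩
      · simp only [Function.mem_support, ne_eq]
        exact mul_ne_zero (Nat.cast_ne_zero.mpr hk) (pow_ne_zero _ (pow_ne_zero _ hune))
      · simp only
        rw [Nat.mul_succ] at hm
        omega
    · intro ⟨s, hs⟩
      simp only
      have harg : k * s + k - 1 + 1 = k * (s+1) := by
        rw [Nat.mul_succ]
        omega
      rw [harg, if_pos ⟨s+1, by ring⟩, pow_mul]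
      ring
  rw [key, tsum_mul_left, geom_shift _ huk]
  ring
def PApprox (g : ℂ → ℝ) : Prop :=
  ∀ ε > 0, ∃ (n : ℕ) (f : Fin n → ℂ), (∀ i, ‖f i‖ < 1) ∧
    ∀ ζ : ℂ, ‖ζ‖ = 1 → |g ζ - ∑ i, poissonK (f i) ζ + n| < ε

lemma papprox_congr {f g : ℂ → ℝ} (hfg : ∀ ζ, ‖ζ‖ = 1 → f ζ = g ζ) (hg : PApprox g) :
    PApprox f := by
  intro ε hε
  obtain ⟨n, p, hp, hb⟩ := hg ε hε
  exact ⟨n, p, hp, fun ζ hζ => by rw [hfg ζ hζ]; exact hb ζ hζ⟩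

lemma papprox_add {f g : ℂ → ℝ} (hf : PApprox f) (hg : PApprox g) :
    PApprox (fun ζ => f ζ + g ζ) := by
  intro ε hε
  obtain ⟨n₁, p₁, hp₁, hb₁⟩ := hf (ε/2) (by linarith)
  obtain ⟨n₂, p₂, hp₂, hb₂⟩ := hg (ε/2) (by linarith)
  refine ⟨n₁ + n₂, Fin.append p₁ p₂, ?_, ?_⟩
  · intro i
    refine Fin.addCases (fun j => ?_) (fun j => ?_) i
    · rw [Fin.append_left]; exact hp₁ j
    · rw [Fin.append_right]; exact hp₂ j
  · intro ζ hζ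
    have hs : ∑ i : Fin (n₁+n₂), poissonK (Fin.append p₁ p₂ i) ζ
        = ∑ i : Fin n₁, poissonK (p₁ i) ζ + ∑ i : Fin n₂, poissonK (p₂ i) ζ := by
      rw [Fin.sum_univ_add]
      simp [Fin.append_left, Fin.append_right]
    have e1 := hb₁ ζ hζ
    have e2 := hb₂ ζ hζ
    rw [hs]
    push_cast
    calc |f ζ + g ζ - (∑ i : Fin n₁, poissonK (p₁ i) ζ + ∑ i : Fin n₂, poissonK (p₂ i) ζ) + ((n₁:ℝ) + n₂)|
        ≤ |f ζ - ∑ i : Fin n₁, poissonK (p₁ i) ζ + n₁| + |g ζ - ∑ i : Fin n₂, poissonK (p₂ i) ζ + n₂| := by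
          apply abs_add_le _ _ |>.trans_eq' ; congr 1; ring
    _ < ε/2 + ε/2 := add_lt_add e1 e2
    _ = ε := by ring

lemma cluster_sum_rep (k m : ℕ) (hk : k ≠ 0) (u : ℂ) (hu : ‖u‖ < 1) :
    ∑ j ∈ Finset.range (m*k),
        (u * (Complex.exp (2*Real.pi*Complex.I/k))^j) / (1 - u * (Complex.exp (2*Real.pi*Complex.I/k))^j)
      = (m:ℂ) * (k * u^k / (1 - u^k)) := by
  set ω := Complex.exp (2*Real.pi*Complex.I/k) with hω_def
  have hωk : ω^k = 1 := (Complex.isPrimitiveRoot_exp k hk).pow_eq_one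
  induction m with
  | zero => simp
  | succ m ih =>
    have hmk : (m+1)*k = m*k + k := by ring
    rw [hmk, Finset.sum_range_add, ih]
    have hcongr : ∀ i ∈ Finset.range k,
        (u * ω^(m*k+i))/(1-u*ω^(m*k+i)) = (u*ω^i)/(1-u*ω^i) := by
      intro i _
      have : ω^(m*k+i) = ω^i := by rw [pow_add, mul_comm m k, pow_mul, hωk, one_pow, one_mul]
      rw [this]
    rw [Finset.sum_congr rfl hcongr, cluster_sum k hk u hu]
    push_cast
    ring

lemma cluster_poisson (k m : ℕ) (hk : k ≠ 0) (z ζ : ℂ) (hz : ‖z‖ < 1) (hζ : ‖ζ‖ = 1) :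
    ∑ j ∈ Finset.range (m*k), poissonK (z * (Complex.exp (2*Real.pi*Complex.I/k))^j) ζ
      = (m*k : ℕ) + 2 * ((m:ℂ) * ((k:ℂ) * (z * (starRingEnd ℂ) ζ)^k
          / (1 - (z * (starRingEnd ℂ) ζ)^k))).re := by
  set ω := Complex.exp (2*Real.pi*Complex.I/k) with hω_def
  have hωn : ‖ω‖ = 1 := by
    have harg : (2*Real.pi*Complex.I/k) = ((2*Real.pi/k : ℝ) : ℂ) * Complex.I := by
      push_cast; ring
    rw [hω_def, harg, Complex.norm_exp_ofReal_mul_I]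
  have hu : ‖z * (starRingEnd ℂ) ζ‖ < 1 := by
    rw [norm_mul, RCLike.norm_conj, hζ, mul_one]; exact hz
  have hterm : ∀ j ∈ Finset.range (m*k), poissonK (z*ω^j) ζ
      = 1 + 2*(((z * (starRingEnd ℂ) ζ) * ω^j)/(1-(z * (starRingEnd ℂ) ζ)*ω^j)).re := by
    intro j _
    have hjn : ‖z * ω^j‖ < 1 := by
      rw [norm_mul, norm_pow, hωn, one_pow, mul_one]; exact hz
    rw [poissonK_formula _ _ hζ hjn]
    rw [show z * ω^j * (starRingEnd ℂ) ζ = (z * (starRingEnd ℂ) ζ) * ω^j from by ring]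
  rw [Finset.sum_congr rfl hterm, Finset.sum_add_distrib, Finset.sum_const, Finset.card_range]
  rw [← Finset.mul_sum, ← Complex.re_sum, cluster_sum_rep k m hk _ hu]
  simp [nsmul_eq_mul]

lemma papprox_mode (k : ℕ) (hk : k ≠ 0) (c : ℂ) : PApprox (fun ζ => (c * ζ^k).re) := by
  intro ε hε
  by_cases hc : c = 0
  · refine ⟨0, ![], by simp, fun ζ hζ => by simpa [hc] using hε⟩
  have hcpos : 0 < ‖c‖ := norm_pos_iff.mpr hc
  obtain ⟨m, hm⟩ := exists_nat_gt (max (‖c‖) (‖c‖^2/ε))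
  have hmc : ‖c‖ < m := lt_of_le_of_lt (le_max_left _ _) hm
  have hmε : ‖c‖^2/ε < m := lt_of_le_of_lt (le_max_right _ _) hm
  have hm0 : 0 < (m:ℝ) := lt_trans hcpos hmc
  have hk1 : (1:ℝ) ≤ k := by exact_mod_cast Nat.one_le_iff_ne_zero.mpr hk
  set M : ℝ := 2*m*k with hM_def
  have hMpos : 0 < M := by positivity
  obtain ⟨z, hzk⟩ := IsAlgClosed.exists_pow_nat_eq ((starRingEnd ℂ) c / (M:ℂ))
    (Nat.pos_of_ne_zero hk)
  have hzn : ‖z‖^k = ‖c‖/M := by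
    rw [← norm_pow, hzk, norm_div, RCLike.norm_conj, Complex.norm_real,
      Real.norm_of_nonneg hMpos.le]
  have hchalf : ‖c‖/M ≤ 1/2 := by
    rw [div_le_div_iff₀ hMpos (by norm_num)]
    have : ‖c‖ ≤ m*k := by nlinarith
    nlinarith
  have hz1 : ‖z‖ < 1 := by
    by_contra hcon
    push_neg at hcon
    have : (1:ℝ) ≤ ‖z‖^k := one_le_pow₀ hcon
    rw [hzn] at this
    linarith
  refine ⟨m*k, fun i : Fin (m*k) => z * (Complex.exp (2*Real.pi*Complex.I/k))^(i:ℕ), ?_, ?_⟩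
  · intro i
    have hωn : ‖Complex.exp (2*Real.pi*Complex.I/k)‖ = 1 := by
      have harg : (2*Real.pi*Complex.I/k) = ((2*Real.pi/k : ℝ) : ℂ) * Complex.I := by
        push_cast; ring
      rw [harg, Complex.norm_exp_ofReal_mul_I]
    rw [norm_mul, norm_pow, hωn, one_pow, mul_one]
    exact hz1
  intro ζ hζ
  rw [Fin.sum_univ_eq_sum_range (fun j => poissonK (z * (Complex.exp (2*Real.pi*Complex.I/k))^j) ζ) (m*k)]
  rw [cluster_poisson k m hk z ζ hz1 hζ]
  set v : ℂ := (z * (starRingEnd ℂ) ζ)^k with hv_def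
  have hvn : ‖v‖ = ‖c‖/M := by
    rw [hv_def, norm_pow, norm_mul, RCLike.norm_conj, hζ, mul_one, hzn]
  have hvhalf : ‖v‖ ≤ 1/2 := hvn ▸ hchalf
  have h1v : (1:ℂ) - v ≠ 0 := by
    intro hh
    rw [sub_eq_zero] at hh
    have : ‖v‖ = 1 := by rw [← hh]; simp
    linarith
  -- key complex identity
  have hζk : ((starRingEnd ℂ) ζ)^k = (starRingEnd ℂ) (ζ^k) := (map_pow _ _ _).symm
  have h2mkv : (M:ℂ) * v = (starRingEnd ℂ) (c * ζ^k) := by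
    have hMne : (M:ℂ) ≠ 0 := by exact_mod_cast hMpos.ne'
    rw [hv_def, mul_pow, hzk, map_mul, ← hζk, div_mul_eq_mul_div, mul_div_assoc']
    exact mul_div_cancel_left₀ _ hMne
  have hcx : (M:ℂ) * v - 2*((m:ℂ)*((k:ℂ)*v/(1-v)))
      = -(2*((m:ℂ)*((k:ℂ)*(v*v/(1-v))))) := by
    have hMc : (M:ℂ) = 2*(m:ℂ)*(k:ℂ) := by rw [hM_def]; push_cast; ring
    rw [hMc]
    field_simp
    ring
  have hre := congrArg Complex.re hcx
  simp only [Complex.sub_re, Complex.neg_re] at hre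
  have hreM : ((M:ℂ) * v).re = (c * ζ^k).re := by
    rw [h2mkv, Complex.conj_re]
  have hre2 : ∀ w : ℂ, ((2:ℂ)*w).re = 2*w.re := fun w => by
    simp [Complex.mul_re]
  rw [hre2, hre2, hreM] at hre
  -- now the real estimate
  have hgoal_eq : (c * ζ^k).re - ((m*k:ℕ) + 2 * ((m:ℂ) * ((k:ℂ)*v/(1-v))).re) + ((m*k:ℕ):ℝ)
      = -(2*((m:ℂ)*((k:ℂ)*(v*v/(1-v)))).re) := by
    rw [← hre]; ring
  rw [hgoal_eq]
  -- bound
  have hnormC : ‖(m:ℂ)*((k:ℂ)*(v*v/(1-v)))‖ ≤ (m:ℝ)*k*(‖v‖^2 * 2) := by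
    have h1vn : (1:ℝ) - ‖v‖ ≤ ‖1 - v‖ := by
      calc (1:ℝ) - ‖v‖ ≤ |1 - ‖v‖| := le_abs_self _
      _ = |‖(1:ℂ)‖ - ‖v‖| := by norm_num
      _ ≤ ‖1 - v‖ := abs_norm_sub_norm_le _ _
    have hpos1v : (0:ℝ) < ‖1-v‖ := by linarith
    have hvv : ‖v‖*‖v‖/‖1-v‖ ≤ ‖v‖^2*2 := by
      rw [div_le_iff₀ hpos1v]
      nlinarith [norm_nonneg v]
    calc ‖(m:ℂ)*((k:ℂ)*(v*v/(1-v)))‖ = (m:ℝ)*((k:ℝ)*(‖v‖*‖v‖/‖1-v‖)) := by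
          rw [norm_mul, norm_mul, norm_div, norm_mul, Complex.norm_natCast,
            Complex.norm_natCast]
    _ = ((m:ℝ)*k)*(‖v‖*‖v‖/‖1-v‖) := by ring
    _ ≤ ((m:ℝ)*k)*(‖v‖^2*2) := mul_le_mul_of_nonneg_left hvv (by positivity)
    _ = (m:ℝ)*k*(‖v‖^2*2) := by ring
  have habs : |(-(2*((m:ℂ)*((k:ℂ)*(v*v/(1-v)))).re))| ≤ 2*((m:ℝ)*k*(‖v‖^2*2)) := by
    rw [abs_neg, abs_mul, abs_of_pos (by norm_num : (0:ℝ) < 2)]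
    have h1 : |((m:ℂ)*((k:ℂ)*(v*v/(1-v)))).re| ≤ ‖(m:ℂ)*((k:ℂ)*(v*v/(1-v)))‖ := by
      exact Complex.abs_re_le_norm _
    linarith
  have hfinal : 2*((m:ℝ)*k*(‖v‖^2*2)) < ε := by
    have hP : (0:ℝ) < (m:ℝ)*k := by positivity
    have hveq : 2*((m:ℝ)*k*(‖v‖^2*2)) = ‖c‖^2/((m:ℝ)*k) := by
      rw [hvn, hM_def, div_pow]
      field_simp
    rw [hveq]
    have h1 : ‖c‖^2/((m:ℝ)*k) ≤ ‖c‖^2/m := by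
      apply div_le_div_of_nonneg_left (by positivity) hm0
      nlinarith
    have h2 : ‖c‖^2/(m:ℝ) < ε := by
      rw [div_lt_iff₀ hm0]
      rw [div_lt_iff₀ hε] at hmε
      linarith
    linarith
  calc |(-(2*((m:ℂ)*((k:ℂ)*(v*v/(1-v)))).re))| ≤ 2*((m:ℝ)*k*(‖v‖^2*2)) := habs
  _ < ε := hfinal

lemma papprox_zero : PApprox (fun _ => 0) := by
  intro ε hε
  refine ⟨0, ![], fun i => i.elim0, fun ζ hζ => by simpa using hε⟩

lemma papprox_sum {ι : Type*} (s : Finset ι) (g : ι → ℂ → ℝ)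
    (hg : ∀ i ∈ s, PApprox (g i)) : PApprox (fun ζ => ∑ i ∈ s, g i ζ) := by
  induction s using Finset.cons_induction with
  | empty => simpa using papprox_zero
  | cons a s ha ih =>
    simp only [Finset.sum_cons]
    exact papprox_add (hg a (Finset.mem_cons_self a s))
      (ih fun i hi => hg i (Finset.mem_cons.mpr (Or.inr hi)))

lemma papprox_zpow (a : ℂ) (nn : ℤ) (hnn : nn ≠ 0) : PApprox (fun ζ => (a * ζ^nn).re) := by
  rcases lt_or_gt_of_ne hnn with hneg | hpos
  · have hk : (-nn).toNat ≠ 0 := by omega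
    apply papprox_congr (g := fun ζ => ((starRingEnd ℂ) a * ζ^((-nn).toNat)).re)
      _ (papprox_mode _ hk _)
    intro ζ hζ
    have habs : ‖ζ‖ = 1 := hζ
    have hnorm : ‖ζ^(-nn)‖ = 1 := by
      rw [norm_zpow, habs, one_zpow]
    have hpow : (ζ^((-nn).toNat) : ℂ) = ζ^(-nn) := by
      rw [← zpow_natCast, Int.toNat_of_nonneg (by omega)]
    have h1 : (starRingEnd ℂ) (ζ^((-nn).toNat)) = ζ^nn := by
      rw [hpow, ← Complex.inv_eq_conj hnorm, zpow_neg, inv_inv]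
    calc (a * ζ^nn).re = (a * (starRingEnd ℂ) (ζ^((-nn).toNat))).re := by rw [h1]
    _ = ((starRingEnd ℂ) (a * (starRingEnd ℂ) (ζ^((-nn).toNat)))).re := (Complex.conj_re _).symm
    _ = ((starRingEnd ℂ) a * ζ^((-nn).toNat)).re := by rw [map_mul, Complex.conj_conj]
  · have hk : nn.toNat ≠ 0 := by omega
    apply papprox_congr (g := fun ζ => (a * ζ^(nn.toNat)).re) _ (papprox_mode _ hk _)
    intro ζ hζ
    rw [show (ζ:ℂ)^(nn.toNat) = ζ^((nn.toNat:ℤ)) from (zpow_natCast ζ nn.toNat).symm,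
      Int.toNat_of_nonneg (by omega)]

/-- a continuous function on the circle with zero mean can be uniformly
approximated by differences of sums of Poisson kernels with poles in the disk. -/
theorem approx_by_poisson_differences
    (h : ℂ → ℝ) (hcont : ContinuousOn h (Metric.sphere (0 : ℂ) 1))
    (hmean : ∫ θ in (0:ℝ)..(2 * Real.pi), h (Complex.exp (θ * Complex.I)) = 0)
    (ε : ℝ) (hε : 0 < ε) :
    ∃ (n : ℕ) (z w : Fin n → ℂ), (∀ k, ‖z k‖ < 1) ∧ (∀ k, ‖w k‖ < 1) ∧
      ∀ ζ : ℂ, ‖ζ‖ = 1 →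
        |h ζ - ∑ k, poissonK (z k) ζ + ∑ k, poissonK (w k) ζ| < ε := by
  haveI : Fact (0 < 2 * Real.pi) := ⟨by positivity⟩
  set δ := ε/3 with hδ_def
  have hδ : 0 < δ := by positivity
  have hsub : ∀ c : Circle, ((c:ℂ)) ∈ Metric.sphere (0:ℂ) 1 := fun c => by
    rw [mem_sphere_zero_iff_norm, Circle.norm_coe]
  have hgcont : Continuous fun x : AddCircle (2*Real.pi) =>
      ((h ((AddCircle.toCircle x : Circle) : ℂ) : ℝ) : ℂ) := by
    apply Complex.continuous_ofReal.comp
    apply hcont.comp_continuous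
    · exact continuous_subtype_val.comp AddCircle.continuous_toCircle
    · exact fun x => hsub _
  set g : C(AddCircle (2*Real.pi), ℂ) := ⟨_, hgcont⟩ with hg_def
  have hmem : g ∈ closure ((Submodule.span ℂ (Set.range (@fourier (2*Real.pi)))) :
      Set C(AddCircle (2*Real.pi), ℂ)) := by
    rw [← Submodule.topologicalClosure_coe, span_fourier_closure_eq_top]
    trivial
  obtain ⟨f, hfmem, hdist⟩ := Metric.mem_closure_iff.mp hmem δ hδ
  obtain ⟨p, coeffs, vv, hsum⟩ := Submodule.mem_span_set'.mp hfmem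
  have hvn : ∀ i, ∃ nn : ℤ, fourier nn = (vv i : C(AddCircle (2*Real.pi), ℂ)) :=
    fun i => (vv i).2
  choose nix hnix using hvn
  have hexp_unit : ∀ θ : ℝ, ‖Complex.exp (θ * Complex.I)‖ = 1 := fun θ => by
    rw [Complex.norm_exp_ofReal_mul_I]
  have hsurj : ∀ ζ : ℂ, ‖ζ‖ = 1 → ∃ θ : ℝ, Complex.exp (θ * Complex.I) = ζ := by
    intro ζ hζ
    refine ⟨Complex.arg ζ, ?_⟩
    have h2 := Complex.norm_mul_exp_arg_mul_I ζ
    rwa [show ‖ζ‖ = 1 from hζ,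
      Complex.ofReal_one, one_mul] at h2
  have hfval : ∀ θ : ℝ, f ((θ : ℝ) : AddCircle (2*Real.pi))
      = ∑ i, coeffs i * (Complex.exp (θ * Complex.I))^(nix i) := by
    intro θ
    rw [← hsum, ContinuousMap.sum_apply]
    refine Finset.sum_congr rfl fun i _ => ?_
    rw [ContinuousMap.smul_apply, ← hnix i, smul_eq_mul]
    congr 1
    rw [fourier_coe_apply, ← Complex.exp_int_mul]
    congr 1
    have hpi : (Real.pi : ℂ) ≠ 0 := by exact_mod_cast Real.pi_ne_zero
    push_cast
    field_simp
  have hgval : ∀ θ : ℝ, g ((θ : ℝ) : AddCircle (2*Real.pi))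
      = ((h (Complex.exp (θ * Complex.I)) : ℝ) : ℂ) := by
    intro θ
    rw [hg_def]
    simp only [ContinuousMap.coe_mk]
    congr 2
    rw [AddCircle.toCircle_apply_mk, Circle.coe_exp]
    have harg : 2*Real.pi/(2*Real.pi)*θ = θ := by
      rw [div_self (by positivity : (2*Real.pi) ≠ 0), one_mul]
    rw [harg]
  -- define F, G, a0
  set F : ℂ → ℝ := fun w => ∑ i, (coeffs i * w^(nix i)).re with hF_def
  set G : ℂ → ℝ := fun w => ∑ i ∈ Finset.univ.filter (fun i => nix i ≠ 0),
    (coeffs i * w^(nix i)).re with hG_def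
  set a0 : ℝ := ∑ i ∈ Finset.univ.filter (fun i => ¬ nix i ≠ 0), (coeffs i).re with ha0_def
  have hFG : ∀ w : ℂ, F w = G w + a0 := by
    intro w
    rw [hF_def, hG_def, ha0_def]
    simp only
    rw [← Finset.sum_filter_add_sum_filter_not Finset.univ (fun i => nix i ≠ 0)
      (fun i => (coeffs i * w^(nix i)).re)]
    congr 1
    refine Finset.sum_congr rfl fun i hi => ?_
    rw [Finset.mem_filter] at hi
    rw [not_not.mp hi.2, zpow_zero, mul_one]
  have hhF : ∀ ζ : ℂ, ‖ζ‖ = 1 → |h ζ - F ζ| ≤ δ := by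
    intro ζ hζ
    obtain ⟨θ, hθ⟩ := hsurj ζ hζ
    have h1 : (g ((θ : ℝ) : AddCircle (2*Real.pi)) - f ((θ : ℝ) : AddCircle (2*Real.pi))).re
        = h ζ - F ζ := by
      rw [hgval, hfval, hθ, Complex.sub_re, Complex.ofReal_re, Complex.re_sum, hF_def]
    calc |h ζ - F ζ| = |(g ((θ : ℝ) : AddCircle (2*Real.pi))
          - f ((θ : ℝ) : AddCircle (2*Real.pi))).re| := by rw [h1]
    _ ≤ ‖(g ((θ : ℝ) : AddCircle (2*Real.pi))
          - f ((θ : ℝ) : AddCircle (2*Real.pi)))‖ := Complex.abs_re_le_norm _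
    _ = dist (g ((θ : ℝ) : AddCircle (2*Real.pi))) (f ((θ : ℝ) : AddCircle (2*Real.pi))) :=
        (Complex.dist_eq _ _).symm
    _ ≤ dist g f := ContinuousMap.dist_apply_le_dist _
    _ ≤ δ := hdist.le
  -- integral computation
  set Φ : ℝ → ℝ := fun θ => ∑ i, (coeffs i * Complex.exp ((nix i : ℂ) * Complex.I * θ)).re
    with hΦ_def
  have hΦF : ∀ θ : ℝ, F (Complex.exp (θ * Complex.I)) = Φ θ := by
    intro θ
    rw [hF_def, hΦ_def]
    refine Finset.sum_congr rfl fun i _ => ?_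
    rw [← Complex.exp_int_mul]
    congr 2
    ring
  have htermcont : ∀ i : Fin p, Continuous
      (fun θ : ℝ => (coeffs i * Complex.exp ((nix i : ℂ) * Complex.I * θ)).re) := by
    intro i
    apply Complex.continuous_re.comp
    exact continuous_const.mul (Complex.continuous_exp.comp
      (continuous_const.mul Complex.continuous_ofReal))
  have hΦcont : Continuous Φ := by
    rw [hΦ_def]
    exact continuous_finset_sum _ fun i _ => htermcont i
  have hterm : ∀ i : Fin p, (∫ θ in (0:ℝ)..(2*Real.pi),
      (coeffs i * Complex.exp ((nix i : ℂ) * Complex.I * θ)).re)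
      = if nix i ≠ 0 then 0 else 2*Real.pi*(coeffs i).re := by
    intro i
    by_cases hi : nix i = 0
    · rw [if_neg (by simpa using hi)]
      have : ∀ θ : ℝ, (coeffs i * Complex.exp ((nix i : ℂ) * Complex.I * θ)).re
          = (coeffs i).re := by
        intro θ
        rw [hi]
        simp
      rw [intervalIntegral.integral_congr (fun θ _ => this θ)]
      rw [intervalIntegral.integral_const]
      simp [smul_eq_mul]
    · rw [if_pos hi]
      have hInt : IntervalIntegrable
          (fun θ : ℝ => coeffs i * Complex.exp ((nix i : ℂ) * Complex.I * θ))
          MeasureTheory.volume 0 (2*Real.pi) := by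
        apply Continuous.intervalIntegrable
        exact continuous_const.mul (Complex.continuous_exp.comp
          (continuous_const.mul Complex.continuous_ofReal))
      have hcomm := Complex.reCLM.intervalIntegral_comp_comm hInt
      have hstep : (∫ θ in (0:ℝ)..(2*Real.pi),
          (coeffs i * Complex.exp ((nix i : ℂ) * Complex.I * θ)).re)
          = ((∫ θ in (0:ℝ)..(2*Real.pi),
              coeffs i * Complex.exp ((nix i : ℂ) * Complex.I * θ))).re := by
        exact hcomm
      rw [hstep, intervalIntegral.integral_const_mul]
      have hc : ((nix i : ℂ) * Complex.I) ≠ 0 := by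
        apply mul_ne_zero
        · exact_mod_cast hi
        · exact Complex.I_ne_zero
      rw [integral_exp_mul_complex hc]
      have h2pi : Complex.exp ((nix i : ℂ) * Complex.I * ((2*Real.pi : ℝ) : ℂ)) = 1 := by
        rw [show (nix i : ℂ) * Complex.I * ((2*Real.pi : ℝ) : ℂ)
            = (nix i : ℂ) * (2*(Real.pi:ℂ)*Complex.I) from by push_cast; ring]
        exact Complex.exp_int_mul_two_pi_mul_I (nix i)
      rw [h2pi]
      simp
  have hΦint : (∫ θ in (0:ℝ)..(2*Real.pi), Φ θ) = 2*Real.pi * a0 := by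
    rw [hΦ_def]
    rw [intervalIntegral.integral_finset_sum (fun i _ => (htermcont i).intervalIntegrable _ _)]
    rw [Finset.sum_congr rfl (fun i _ => hterm i), ha0_def, Finset.mul_sum, Finset.sum_filter]
    exact Finset.sum_congr rfl fun i _ => by by_cases hi : nix i = 0 <;> simp [hi]
  have hhint : IntervalIntegrable (fun θ : ℝ => h (Complex.exp (θ * Complex.I)))
      MeasureTheory.volume 0 (2*Real.pi) := by
    apply Continuous.intervalIntegrable
    apply hcont.comp_continuous
    · exact Complex.continuous_exp.comp (Complex.continuous_ofReal.mul continuous_const)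
    · intro θ
      rw [mem_sphere_zero_iff_norm]
      exact hexp_unit θ
  have hdiffint : (∫ θ in (0:ℝ)..(2*Real.pi),
      (Φ θ - h (Complex.exp (θ * Complex.I)))) = 2*Real.pi * a0 := by
    rw [intervalIntegral.integral_sub (hΦcont.intervalIntegrable _ _) hhint, hΦint, hmean,
      sub_zero]
  have ha0 : |a0| ≤ δ := by
    have hbnd : ∀ x ∈ Set.uIoc (0:ℝ) (2*Real.pi),
        ‖Φ x - h (Complex.exp (x * Complex.I))‖ ≤ δ := by
      intro x _
      rw [Real.norm_eq_abs, abs_sub_comm, ← hΦF x]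
      exact hhF _ (hexp_unit x)
    have := intervalIntegral.norm_integral_le_of_norm_le_const hbnd
    rw [hdiffint] at this
    rw [Real.norm_eq_abs, abs_mul, abs_of_pos (by positivity : (0:ℝ) < 2*Real.pi)] at this
    have h2 : |2*Real.pi - 0| = 2*Real.pi := by
      rw [sub_zero, abs_of_pos (by positivity)]
    rw [h2] at this
    have hpi : (0:ℝ) < 2*Real.pi := by positivity
    nlinarith [abs_nonneg a0]
  -- PApprox of G
  have hGapprox : PApprox G := by
    rw [hG_def]
    apply papprox_sum
    intro i hi
    rw [Finset.mem_filter] at hi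
    exact papprox_zpow (coeffs i) (nix i) hi.2
  obtain ⟨n, pl, hpl, hbound⟩ := hGapprox δ hδ
  refine ⟨n, pl, fun _ => 0, hpl, fun i => by simp, ?_⟩
  intro ζ hζ
  have hw : ∑ _i : Fin n, poissonK 0 ζ = (n:ℝ) := by
    rw [Finset.sum_const, Finset.card_univ, Fintype.card_fin, nsmul_eq_mul,
      poissonK_zero ζ hζ, mul_one]
  have hb := hbound ζ hζ
  have hF2 := hhF ζ hζ
  calc |h ζ - ∑ i, poissonK (pl i) ζ + ∑ _i : Fin n, poissonK 0 ζ|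
      = |(h ζ - F ζ) + (G ζ - ∑ i, poissonK (pl i) ζ + (n:ℝ)) + a0| := by
        rw [hw]
        congr 1
        rw [hFG ζ]
        ring
  _ ≤ |h ζ - F ζ| + |G ζ - ∑ i, poissonK (pl i) ζ + (n:ℝ)| + |a0| := abs_add_three _ _ _
  _ < δ + δ + δ := by
      have h1 : |h ζ - F ζ| ≤ δ := hF2
      have h3 : |a0| ≤ δ := ha0
      linarith [hb]
  _ = ε := by rw [hδ_def]; ring
end

section
/- For every z₀ ∈ 𝔻 and every ε > 0 there exists n ∈ ℕ such that, setting z_k = z₀ exp(2πik/n) for k = 0, 1, …, n−1, one has |∑_{k=0}^{n−1} P(z_k, ζ) − n| < ε for all ζ ∈ 𝕋. -/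
open Complex MeasureTheory

lemma poissonK_eq (z ζ : ℂ) (hζ : ‖ζ‖ = 1) (hz : ‖z‖ < 1) :
    poissonK z ζ = 2 * (ζ / (ζ - z)).re - 1 := by
  have hne : ζ - z ≠ 0 := sub_ne_zero.2 (by rintro rfl; exact hz.ne hζ)
  have hs : Complex.normSq (ζ - z) ≠ 0 := by simpa [Complex.normSq_eq_zero] using hne
  have h1 : ζ.re * ζ.re + ζ.im * ζ.im = 1 := by
    have := Complex.normSq_eq_norm_sq ζ
    simpa [Complex.normSq_apply, hζ] using (by rw [this, hζ]; norm_num : Complex.normSq ζ = 1)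
  have hz2 : ‖z‖ ^ 2 = z.re * z.re + z.im * z.im := by
    rw [Complex.sq_norm, Complex.normSq_apply]
  have hs2 : ‖ζ - z‖ ^ 2 = Complex.normSq (ζ - z) := by
    rw [Complex.sq_norm]
  rw [poissonK, Complex.div_re, hz2, hs2]
  field_simp
  simp only [Complex.normSq_apply, Complex.sub_re, Complex.sub_im]
  ring_nf
  nlinarith [h1]

lemma prod_unity (n : ℕ) (hn : 0 < n) (y : ℂ) :
    ∏ k : Fin n, (y - Complex.exp (2 * Real.pi * Complex.I * k / n)) = y ^ n - 1 := by
  set ω : ℂ := Complex.exp (2 * Real.pi * Complex.I / n) with hω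
  have hprim : IsPrimitiveRoot ω n := Complex.isPrimitiveRoot_exp n hn.ne'
  have hpow : ∀ k : ℕ, Complex.exp (2 * Real.pi * Complex.I * k / n) = ω ^ k := by
    intro k
    rw [hω, ← Complex.exp_nat_mul]
    ring_nf
  have himg : Polynomial.nthRootsFinset n (1 : ℂ) = (Finset.range n).image (ω ^ ·) := by
    refine (Finset.eq_of_subset_of_card_le ?_ ?_).symm
    · intro x hx
      simp only [Finset.mem_image, Finset.mem_range] at hx
      obtain ⟨k, hk, rfl⟩ := hx
      exact (Polynomial.mem_nthRootsFinset hn _).2 (by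
        rw [← pow_mul, mul_comm, pow_mul, hprim.pow_eq_one, one_pow])
    · rw [hprim.card_nthRootsFinset, Finset.card_image_of_injOn ?_, Finset.card_range]
      intro i hi j hj hij
      exact hprim.pow_inj (Finset.mem_range.1 hi) (Finset.mem_range.1 hj) hij
  have hXpow := Polynomial.X_pow_sub_one_eq_prod hn hprim
  have := congrArg (Polynomial.eval y) hXpow
  simp only [Polynomial.eval_sub, Polynomial.eval_pow, Polynomial.eval_X, Polynomial.eval_one,
    Polynomial.eval_prod, Polynomial.eval_C, himg] at this
  rw [Finset.prod_image (by
    intro i hi j hj hij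
    exact hprim.pow_inj (Finset.mem_range.1 hi) (Finset.mem_range.1 hj) hij)] at this
  rw [Fin.prod_univ_eq_prod_range (fun k => y - Complex.exp (2 * Real.pi * Complex.I * k / n))]
  rw [this]
  exact Finset.prod_congr rfl fun k _ => by rw [hpow k]

lemma prod_root (n : ℕ) (hn : 0 < n) (z₀ x : ℂ) :
    ∏ k : Fin n, (x - z₀ * Complex.exp (2 * Real.pi * Complex.I * k / n)) = x ^ n - z₀ ^ n := by
  rcases eq_or_ne z₀ 0 with rfl | hz₀
  · simp [Finset.prod_const, hn.ne', zero_pow hn.ne']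
  · have h := prod_unity n hn (x / z₀)
    calc ∏ k : Fin n, (x - z₀ * Complex.exp (2 * Real.pi * Complex.I * k / n))
        = ∏ k : Fin n, (z₀ * (x / z₀ - Complex.exp (2 * Real.pi * Complex.I * k / n))) :=
          Finset.prod_congr rfl fun k _ => by field_simp
      _ = z₀ ^ n * ((x / z₀) ^ n - 1) := by
          rw [Finset.prod_mul_distrib, Finset.prod_const, h]; simp
      _ = x ^ n - z₀ ^ n := by rw [mul_sub, div_pow, mul_div_cancel₀ _ (pow_ne_zero _ hz₀), mul_one]

lemma norm_rot (z₀ : ℂ) (t : ℝ) (c : ℂ) (hc : c = (t : ℂ) * Complex.I) :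
    ‖z₀ * Complex.exp c‖ = ‖z₀‖ := by
  rw [norm_mul, hc]
  simp [Complex.norm_exp_ofReal_mul_I]

lemma norm_rot' (z₀ : ℂ) (n k : ℕ) :
    ‖z₀ * Complex.exp (2 * Real.pi * Complex.I * k / n)‖ = ‖z₀‖ :=
  norm_rot z₀ (2 * Real.pi * k / n) _ (by push_cast; ring)

lemma sum_frac (n : ℕ) (hn : 0 < n) (z₀ ζ : ℂ) (hz₀ : ‖z₀‖ < 1) (hζ : ‖ζ‖ = 1) :
    ∑ k : Fin n, ζ / (ζ - z₀ * Complex.exp (2 * Real.pi * Complex.I * k / n))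
      = n * ζ ^ n / (ζ ^ n - z₀ ^ n) := by
  set z : Fin n → ℂ := fun k => z₀ * Complex.exp (2 * Real.pi * Complex.I * k / n) with hz
  have hnz : ∀ k, ‖z k‖ < 1 := fun k => by rw [hz]; rw [norm_rot' z₀ n k]; exact hz₀
  have hne : ∀ k, ζ - z k ≠ 0 := fun k =>
    sub_ne_zero.2 fun h => ((h ▸ hζ) ▸ hnz k).ne rfl
  have hDne : ζ ^ n - z₀ ^ n ≠ 0 := by
    refine sub_ne_zero.2 fun h => ?_
    have h1 : ‖ζ ^ n‖ = 1 := by rw [norm_pow, hζ, one_pow]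
    have h2 : ‖z₀ ^ n‖ < 1 := by rw [norm_pow]; exact pow_lt_one₀ (norm_nonneg _) hz₀ hn.ne'
    rw [h] at h1; exact h2.ne h1
  have hfun : (fun x => ∏ k : Fin n, (x - z k)) = fun x => x ^ n - z₀ ^ n :=
    funext fun x => prod_root n hn z₀ x
  have hld := logDeriv_prod (s := Finset.univ) (f := fun k (x : ℂ) => x - z k) (x := ζ)
      (fun k _ => hne k) (fun k _ => (differentiable_id.sub_const _).differentiableAt)
  have hL : logDeriv (fun x : ℂ => ∏ k : Fin n, (x - z k)) ζ
      = ∑ k : Fin n, 1 / (ζ - z k) := by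
    rw [hld]
    refine Finset.sum_congr rfl fun k _ => ?_
    rw [logDeriv_apply]
    simp [deriv_sub_const]
  have hR : logDeriv (fun x : ℂ => x ^ n - z₀ ^ n) ζ
      = n * ζ ^ (n - 1) / (ζ ^ n - z₀ ^ n) := by
    rw [logDeriv_apply]
    congr 1
    rw [deriv_sub_const]
    simp
  have key : ∑ k : Fin n, 1 / (ζ - z k) = n * ζ ^ (n - 1) / (ζ ^ n - z₀ ^ n) := by
    rw [← hL, hfun, hR]
  have hζ0 : ζ ≠ 0 := fun h => by simp [h] at hζ
  calc ∑ k : Fin n, ζ / (ζ - z k) = ζ * ∑ k : Fin n, 1 / (ζ - z k) := by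
        rw [Finset.mul_sum]; exact Finset.sum_congr rfl fun k _ => by ring
    _ = ζ * (n * ζ ^ (n - 1) / (ζ ^ n - z₀ ^ n)) := by rw [key]
    _ = n * ζ ^ n / (ζ ^ n - z₀ ^ n) := by
        obtain ⟨m, rfl⟩ := Nat.exists_eq_succ_of_ne_zero hn.ne'
        field_simp
        rw [Nat.succ_sub_one, pow_succ']

/-- for `z₀` in the disk, the sum of Poisson kernels over the rotated
points `z_k = z₀ exp(2πik/n)` is uniformly close to `n` on the circle for large `n`. -/
theorem poisson_sum_rotated_points
    (z₀ : ℂ) (hz₀ : ‖z₀‖ < 1) (ε : ℝ) (hε : 0 < ε) :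
    ∃ n : ℕ, 0 < n ∧ ∀ ζ : ℂ, ‖ζ‖ = 1 →
      |(∑ k : Fin n, poissonK (z₀ * Complex.exp (2 * Real.pi * Complex.I * k / n)) ζ)
        - (n : ℝ)| < ε := by
  set r : ℝ := ‖z₀‖ with hr
  have hr0 : 0 ≤ r := norm_nonneg _
  have h1r : 0 < 1 - r := by linarith
  have hδ : 0 < (1 - r) * ε / 2 := by positivity
  have htend : Filter.Tendsto (fun n : ℕ => (n : ℝ) * r ^ n) Filter.atTop (nhds 0) :=
    tendsto_self_mul_const_pow_of_lt_one hr0 hz₀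
  have hev := (htend.eventually (gt_mem_nhds hδ)).and (Filter.eventually_ge_atTop 1)
  obtain ⟨n, hsmall, hn1⟩ := hev.exists
  have hn : 0 < n := hn1
  refine ⟨n, hn, fun ζ hζ => ?_⟩
  set z : Fin n → ℂ := fun k => z₀ * Complex.exp (2 * Real.pi * Complex.I * k / n) with hzdef
  have hnz : ∀ k, ‖z k‖ < 1 := fun k => by rw [hzdef]; rw [norm_rot' z₀ n k]; exact hz₀
  have hDne : ζ ^ n - z₀ ^ n ≠ 0 := by
    refine sub_ne_zero.2 fun h => ?_
    have h1 : ‖ζ ^ n‖ = 1 := by rw [norm_pow, hζ, one_pow]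
    have h2 : ‖z₀ ^ n‖ < 1 := by rw [norm_pow]; exact pow_lt_one₀ hr0 hz₀ hn.ne'
    rw [h] at h1; exact h2.ne h1
  have hsum : (∑ k : Fin n, poissonK (z k) ζ)
      = 2 * (∑ k : Fin n, ζ / (ζ - z k)).re - n := by
    calc ∑ k : Fin n, poissonK (z k) ζ
        = ∑ k : Fin n, (2 * (ζ / (ζ - z k)).re - 1) :=
          Finset.sum_congr rfl fun k _ => poissonK_eq _ _ hζ (hnz k)
      _ = 2 * (∑ k : Fin n, ζ / (ζ - z k)).re - n := by
          rw [Finset.sum_sub_distrib]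
          simp [Complex.re_sum, Finset.mul_sum, Finset.card_univ]
  have hfrac := sum_frac n hn z₀ ζ hz₀ hζ
  have hkey : (∑ k : Fin n, poissonK (z k) ζ) - n
      = 2 * (((n : ℂ) * z₀ ^ n) / (ζ ^ n - z₀ ^ n)).re := by
    rw [hsum, hfrac]
    have : (n : ℂ) * ζ ^ n / (ζ ^ n - z₀ ^ n) - n = (n : ℂ) * z₀ ^ n / (ζ ^ n - z₀ ^ n) := by
      field_simp
      ring
    have hre := congrArg Complex.re this
    simp only [Complex.sub_re, Complex.natCast_re] at hre
    linarith
  rw [hkey]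
  have hnorm : ‖((n : ℂ) * z₀ ^ n) / (ζ ^ n - z₀ ^ n)‖ ≤ n * r ^ n / (1 - r) := by
    rw [norm_div, norm_mul, norm_pow, Complex.norm_natCast]
    have hD1 : 1 - r ≤ ‖ζ ^ n - z₀ ^ n‖ := by
      have := norm_sub_norm_le (ζ ^ n) (z₀ ^ n)
      rw [norm_pow, norm_pow, hζ, one_pow] at this
      have hrn : r ^ n ≤ r := pow_le_of_le_one hr0 hz₀.le hn.ne'
      linarith
    exact div_le_div_of_nonneg_left (by positivity) h1r hD1
  have habs : |2 * (((n : ℂ) * z₀ ^ n) / (ζ ^ n - z₀ ^ n)).re|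
      ≤ 2 * ‖((n : ℂ) * z₀ ^ n) / (ζ ^ n - z₀ ^ n)‖ := by
    rw [abs_mul]
    have h2 : |(2:ℝ)| = 2 := by norm_num
    rw [h2]
    have h3 := Complex.abs_re_le_norm (((n : ℂ) * z₀ ^ n) / (ζ ^ n - z₀ ^ n))
    linarith
  calc |2 * (((n : ℂ) * z₀ ^ n) / (ζ ^ n - z₀ ^ n)).re|
      ≤ 2 * ‖((n : ℂ) * z₀ ^ n) / (ζ ^ n - z₀ ^ n)‖ := habs
    _ ≤ 2 * ((n : ℝ) * r ^ n / (1 - r)) := by linarith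
    _ < 2 * (((1 - r) * ε / 2) / (1 - r)) := by gcongr
    _ = ε := by field_simp
end
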